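/- arXiv:1207.7338 — 6 statements merged into one kernel-verified Lean document; each statement's English description precedes it below -/
import Mathlib

section
/- Let S be a set of pairwise orthogonal bricks in a Hom-finite Krull-Schmidt triangulated k-category T. Suppose there is a distinguished triangle Y → X → Sᵢ → Y[1] with X ∈ (S)ₙ for some n ≥ 1, Sᵢ ∈ S, and the map X → Sᵢ nonzero. Then Y ∈ (S)ₙ₋₁. -/
open CategoryTheory Limits Pretriangulated

universe v u

variable {C : Type u} [Category.{v} C] [Preadditive C] [HasZeroObject C]
  [HasShift C ℤ] [∀ n : ℤ, (shiftFunctor C n).Additive] [Pretriangulated C]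

/-- The extension class `S * T`: objects `X` admitting a distinguished triangle
`A ⟶ X ⟶ B ⟶ A⟦1⟧` with `A ∈ S` and `B ∈ T`. -/
def extStar (S T : Set C) : Set C :=
  {X | ∃ (A B : C) (f : A ⟶ X) (g : X ⟶ B) (h : B ⟶ A⟦(1:ℤ)⟧),
    Triangle.mk f g h ∈ (distTriang C) ∧ A ∈ S ∧ B ∈ T}

/-- The filtration classes `(S)ₙ`, built from the right. -/
def filt (S : Set C) : ℕ → Set C
  | 0 => {X : C | IsZero X}
  | (n+1) => extStar (filt S n) (S ∪ {X : C | IsZero X})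

/-- The filtration classes `ₙ(S)`, built from the left. -/
def filt' (S : Set C) : ℕ → Set C
  | 0 => {X : C | IsZero X}
  | (n+1) => extStar (S ∪ {X : C | IsZero X}) (filt' S n)

/-- The filtration subcategory `F(S) = ⋃ₙ (S)ₙ` generated by `S`. -/
def filtClosure (S : Set C) : Set C := {X | ∃ n, X ∈ filt S n}

/-- A set of pairwise orthogonal bricks: no nonzero maps between distinct members,
and every endomorphism ring is a division ring. -/
def OrthogonalBricks (S : Set C) : Prop :=
  (∀ X ∈ S, ¬ IsZero X ∧ ∀ f : X ⟶ X, f ≠ 0 → IsIso f) ∧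
  (∀ X ∈ S, ∀ Y ∈ S, X ≠ Y → ∀ f : X ⟶ Y, f = 0)

/-- A simple-minded system: a set of pairwise orthogonal bricks whose extension
closure is the whole category. -/
def SimpleMindedSystem (S : Set C) : Prop :=
  OrthogonalBricks S ∧ ∀ X : C, X ∈ filtClosure S

/-- `S^⊥`: objects receiving no nonzero map from objects of `S`. -/
def rightOrth (S : Set C) : Set C := {Y : C | ∀ X ∈ S, ∀ f : X ⟶ Y, f = 0}

/-- `^⊥S`: objects admitting no nonzero map to objects of `S`. -/
def leftOrth (S : Set C) : Set C := {Y : C | ∀ X ∈ S, ∀ f : Y ⟶ X, f = 0}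

/-- `f : A ⟶ M` is a right `T1`-approximation. -/
def IsRightApprox (T1 : Set C) {A M : C} (f : A ⟶ M) : Prop :=
  ∀ A' ∈ T1, ∀ u : A' ⟶ M, ∃ v : A' ⟶ A, v ≫ f = u

/-- `g : M ⟶ B` is a left `T2`-approximation. -/
def IsLeftApprox (T2 : Set C) {M B : C} (g : M ⟶ B) : Prop :=
  ∀ B' ∈ T2, ∀ u : M ⟶ B', ∃ v : B ⟶ B', g ≫ v = u

/-- `f` is right minimal. -/
def RightMinimal {A M : C} (f : A ⟶ M) : Prop :=
  ∀ u : A ⟶ A, u ≫ f = f → IsIso u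

/-- `g` is left minimal. -/
def LeftMinimal {M B : C} (g : M ⟶ B) : Prop :=
  ∀ u : B ⟶ B, g ≫ u = g → IsIso u

/-- A minimal `(T1,T2)`-triangle: a distinguished triangle `A ⟶ M ⟶ B ⟶ A⟦1⟧` with
`A ∈ T1`, `B ∈ T2`, and `A ⟶ M` a minimal right `T1`-approximation. -/
def MinTriangle (T1 T2 : Set C) {A M B : C} (f : A ⟶ M) (g : M ⟶ B)
    (h : B ⟶ A⟦(1:ℤ)⟧) : Prop :=
  Triangle.mk f g h ∈ (distTriang C) ∧ A ∈ T1 ∧ B ∈ T2 ∧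
    IsRightApprox T1 f ∧ RightMinimal f


section Aux

variable [IsTriangulated C]

private lemma extStar_iso_mid {S T : Set C} {X X' : C} (e : X ≅ X') (hX : X ∈ extStar S T) :
    X' ∈ extStar S T := by
  obtain ⟨A, B, f, g, h, ht, hA, hB⟩ := hX
  refine ⟨A, B, f ≫ e.hom, e.inv ≫ g, h, ?_, hA, hB⟩
  refine isomorphic_distinguished _ ht _ ?_
  exact Triangle.isoMk _ _ (Iso.refl A) e.symm (Iso.refl B) (by simp [Triangle.mk]) (by simp [Triangle.mk]) (by simp [Triangle.mk])

private lemma filt_iso {S : Set C} : ∀ {n : ℕ} {X X' : C}, (X ≅ X') → X ∈ filt S n →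
    X' ∈ filt S n
  | 0, _, _, e, hX => hX.of_iso e.symm
  | (n+1), _, _, e, hX => extStar_iso_mid e hX

private lemma caseA (S : Set C) (hS : OrthogonalBricks S) {m : ℕ} {Y X Si A B : C}
    (hSi : Si ∈ S) (hA : A ∈ filt S m) (hB : B ∈ S ∪ {Z : C | IsZero Z})
    (f : Y ⟶ X) (g : X ⟶ Si) (h : Si ⟶ Y⟦(1:ℤ)⟧)
    (ht : Triangle.mk f g h ∈ distTriang C)
    (f' : A ⟶ X) (g' : X ⟶ B) (h' : B ⟶ A⟦(1:ℤ)⟧)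
    (ht' : Triangle.mk f' g' h' ∈ distTriang C)
    (hg : g ≠ 0) (hzero : f' ≫ g = 0) : Y ∈ filt S m := by
  obtain ⟨u, hu⟩ := Triangle.yoneda_exact₂ _ ht' g hzero
  have hune : u ≠ 0 := fun h0 => hg (by rw [hu, h0]; exact Limits.comp_zero)
  have hBS : B ∈ S := by
    rcases hB with hB | hB
    · exact hB
    · exact absurd (hB.eq_of_src u 0) hune
  have hBSi : B = Si := by
    by_contra hne
    exact hune (hS.2 B hBS Si hSi hne u)
  subst hBSi
  have hiso : IsIso u := (hS.1 _ hSi).2 u hune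
  have ht'' : Triangle.mk f' g (inv u ≫ h') ∈ distTriang C := by
    refine isomorphic_distinguished _ ht' _ ?_
    refine Triangle.isoMk _ _ (Iso.refl A) (Iso.refl X) (asIso u).symm ?_ ?_ ?_
    · simp [Triangle.mk]
    · simp [Triangle.mk, hu]
      exact (Category.assoc _ _ _).trans ((congrArg (g' ≫ ·) (asIso u).hom_inv_id).trans (Category.comp_id _))
    · simp [Triangle.mk]
      rfl
  have e := isoTriangleOfIso₁₂ _ _ (rot_of_distTriang _ ht) (rot_of_distTriang _ ht'')
    (Iso.refl X) (Iso.refl B) ((Category.comp_id _).trans (Category.id_comp _).symm)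
  have eY : Y ≅ A := (shiftFunctor C (1:ℤ)).preimageIso (Triangle.π₃.mapIso e)
  exact filt_iso eY.symm hA

private lemma caseB (S : Set C) {k : ℕ} {Y X Si A B W : C}
    (hB : B ∈ S ∪ {Z : C | IsZero Z}) (hW : W ∈ filt S k)
    (f : Y ⟶ X) (g : X ⟶ Si) (h : Si ⟶ Y⟦(1:ℤ)⟧)
    (ht : Triangle.mk f g h ∈ distTriang C)
    (f' : A ⟶ X) (g' : X ⟶ B) (h' : B ⟶ A⟦(1:ℤ)⟧)
    (ht' : Triangle.mk f' g' h' ∈ distTriang C)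
    (w : W ⟶ A) (d : Si ⟶ W⟦(1:ℤ)⟧)
    (htW : Triangle.mk w (f' ≫ g) d ∈ distTriang C) :
    Y ∈ filt S (k+1) := by
  have h₂₃ : Triangle.mk g h (-f⟦(1:ℤ)⟧') ∈ distTriang C := rot_of_distTriang _ ht
  have h₁₃ : Triangle.mk (f' ≫ g) d (-w⟦(1:ℤ)⟧') ∈ distTriang C := rot_of_distTriang _ htW
  have oct := Triangulated.someOctahedron (u₁₂ := f') (u₂₃ := g) (u₁₃ := f' ≫ g) rfl
    ht' h₂₃ h₁₃
  -- oct.mem : triangle B ⟶ W⟦1⟧ ⟶ Y⟦1⟧ ⟶ B⟦1⟧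
  have hT3 := inv_rot_of_distTriang _ (inv_rot_of_distTriang _ oct.mem)
  have hWmem : W⟦(1:ℤ)⟧⟦(-1:ℤ)⟧ ∈ filt S k :=
    filt_iso ((shiftFunctorCompIsoId C (1:ℤ) (-1) (by omega)).app W).symm hW
  have hY' : Y⟦(1:ℤ)⟧⟦(-1:ℤ)⟧ ∈ filt S (k+1) :=
    ⟨_, _, _, _, _, hT3, hWmem, hB⟩
  exact filt_iso ((shiftFunctorCompIsoId C (1:ℤ) (-1) (by omega)).app Y) hY'

private lemma filt_aux (S : Set C) (hS : OrthogonalBricks S) (n : ℕ) :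
    ∀ (Y X Si : C), Si ∈ S → X ∈ filt S (n+1) →
    ∀ (f : Y ⟶ X) (g : X ⟶ Si) (h : Si ⟶ Y⟦(1:ℤ)⟧),
    Triangle.mk f g h ∈ (distTriang C) → g ≠ 0 → Y ∈ filt S n := by
  induction n with
  | zero =>
    intro Y X Si hSi hX f g h ht hg
    obtain ⟨A, B, f', g', h', ht', hA, hB⟩ := hX
    have hzero : f' ≫ g = 0 := (hA : IsZero A).eq_of_src _ _
    exact caseA S hS hSi hA hB f g h ht f' g' h' ht' hg hzero
  | succ k IH =>
    intro Y X Si hSi hX f g h ht hg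
    obtain ⟨A, B, f', g', h', ht', hA, hB⟩ := hX
    by_cases hzero : f' ≫ g = 0
    · exact caseA S hS hSi hA hB f g h ht f' g' h' ht' hg hzero
    · obtain ⟨W, w, d, htW⟩ := distinguished_cocone_triangle₁ (f' ≫ g)
      have hW : W ∈ filt S k := IH W A Si hSi hA w (f' ≫ g) d htW hzero
      exact caseB S hB hW f g h ht f' g' h' ht' w d htW

end Aux

/-- if `Y ⟶ X ⟶ Sᵢ ⟶ Y[1]` is a distinguished triangle with
`X ∈ (S)ₙ`, `n ≥ 1`, `Sᵢ ∈ S` and the map `X ⟶ Sᵢ` nonzero, then `Y ∈ (S)ₙ₋₁`. -/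
theorem filt_of_triangle_to_brick [IsTriangulated C] (k : Type*) [Field k] [Linear k C]
    (hfin : ∀ X Y : C, Module.Finite k (X ⟶ Y)) [IsIdempotentComplete C]
    (S : Set C) (hS : OrthogonalBricks S)
    (n : ℕ) (hn : 1 ≤ n) (Y X Si : C) (hSi : Si ∈ S) (hX : X ∈ filt S n)
    (f : Y ⟶ X) (g : X ⟶ Si) (h : Si ⟶ Y⟦(1:ℤ)⟧)
    (ht : Triangle.mk f g h ∈ (distTriang C)) (hg : g ≠ 0) :
    Y ∈ filt S (n - 1) := by
  obtain ⟨m, rfl⟩ : ∃ m, n = m + 1 := ⟨n - 1, (Nat.succ_pred_eq_of_pos hn).symm⟩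
  simpa using filt_aux S hS m Y X Si hSi hX f g h ht hg
end

section
/- Let (C, D) be a torsion pair in a Hom-finite Krull-Schmidt triangulated category T, and consider a distinguished triangle C →f X →g D →h C[1]. Then the following are equivalent: (1) C ∈ C and f is a minimal right C-approximation; (2) D ∈ D and g is a minimal left D-approximation. -/
open CategoryTheory Limits Pretriangulated

universe v u

variable {C : Type u} [Category.{v} C] [Preadditive C] [HasZeroObject C]
  [HasShift C ℤ] [∀ n : ℤ, (shiftFunctor C n).Additive] [Pretriangulated C]

/-- A torsion pair `(T1, T2)`: two classes closed under isomorphisms, finite direct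
sums and direct summands, containing the zero objects, with no nonzero maps from
`T1` to `T2`, and such that every object fits in a distinguished triangle with
outer terms in `T1` and `T2`. -/
structure TorsionPair [HasBinaryBiproducts C] (T1 T2 : Set C) : Prop where
  iso1 : ∀ {X Y : C}, (X ≅ Y) → X ∈ T1 → Y ∈ T1
  iso2 : ∀ {X Y : C}, (X ≅ Y) → X ∈ T2 → Y ∈ T2
  zero1 : ∀ X : C, IsZero X → X ∈ T1
  zero2 : ∀ X : C, IsZero X → X ∈ T2
  sum1 : ∀ X Y : C, X ∈ T1 → Y ∈ T1 → (X ⊞ Y) ∈ T1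
  sum2 : ∀ X Y : C, X ∈ T2 → Y ∈ T2 → (X ⊞ Y) ∈ T2
  summand1 : ∀ X Y : C, (X ⊞ Y) ∈ T1 → X ∈ T1
  summand2 : ∀ X Y : C, (X ⊞ Y) ∈ T2 → X ∈ T2
  hom_zero : ∀ X ∈ T1, ∀ Y ∈ T2, ∀ f : X ⟶ Y, f = 0
  exists_triangle : ∀ X : C, ∃ (A B : C) (f : A ⟶ X) (g : X ⟶ B) (h : B ⟶ A⟦(1:ℤ)⟧),
    Triangle.mk f g h ∈ (distTriang C) ∧ A ∈ T1 ∧ B ∈ T2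

lemma mem_of_retract' [HasBinaryBiproducts C] [IsIdempotentComplete C] (S : Set C)
    (hiso : ∀ {X Y : C}, (X ≅ Y) → X ∈ S → Y ∈ S)
    (hsum : ∀ X Y : C, (X ⊞ Y) ∈ S → X ∈ S)
    {Z W : C} (i : Z ⟶ W) (p : W ⟶ Z) (hip : i ≫ p = 𝟙 Z) (hW : W ∈ S) : Z ∈ S := by
  obtain ⟨Y, j, q, hjq, hqj⟩ := IsIdempotentComplete.idempotents_split W (𝟙 W - p ≫ i)
    (by simp [Preadditive.comp_sub, Preadditive.sub_comp, reassoc_of% hip])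
  have hiq : i ≫ q = 0 := by
    haveI : IsSplitMono j := IsSplitMono.mk' ⟨q, hjq⟩
    rw [← cancel_mono j, Category.assoc, hqj, zero_comp]
    simp [Preadditive.comp_sub, reassoc_of% hip]
  have hjpi : j ≫ (p ≫ i) = 0 := by
    have e1 : j ≫ q ≫ j = j ≫ (𝟙 W - p ≫ i) := by rw [hqj]
    rw [reassoc_of% hjq, Preadditive.comp_sub, Category.comp_id] at e1
    exact sub_eq_self.mp e1.symm
  have hjp : j ≫ p = 0 := by
    have e : j ≫ p = (j ≫ (p ≫ i)) ≫ p := by simp [hip]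
    rw [e, hjpi, zero_comp]
  have hiso1 : biprod.desc i j ≫ biprod.lift p q = 𝟙 (Z ⊞ Y) := by
    apply biprod.hom_ext' <;> apply biprod.hom_ext <;>
      simp [hip, hjq, hiq, reassoc_of% hjp, hjp]
  have hiso2 : biprod.lift p q ≫ biprod.desc i j = 𝟙 W := by
    rw [biprod.lift_desc, hqj]; abel
  exact hsum Z Y (hiso (⟨biprod.lift p q, biprod.desc i j, hiso2, hiso1⟩ : W ≅ Z ⊞ Y) hW)

lemma leftMinimal_of_rightMinimal' {A X B : C} {f : A ⟶ X} {g : X ⟶ B} {h : B ⟶ A⟦(1:ℤ)⟧}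
    (ht : Triangle.mk f g h ∈ distTriang C)
    (hf : ∀ u : A ⟶ A, u ≫ f = f → IsIso u) :
    ∀ u : B ⟶ B, g ≫ u = g → IsIso u := by
  intro u hu
  obtain ⟨a, ha₁, ha₂⟩ := complete_distinguished_triangle_morphism₁ _ _ ht ht (𝟙 X) u
    (hu.trans (Category.id_comp g).symm)
  have hIa : IsIso a := hf a (ha₁.symm.trans (Category.comp_id f))
  exact isIso₃_of_isIso₁₂ (T := Triangle.mk f g h) (T' := Triangle.mk f g h)
    { hom₁ := a, hom₂ := 𝟙 X, hom₃ := u,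
      comm₁ := ha₁
      comm₂ := hu.trans (Category.id_comp g).symm
      comm₃ := ha₂ } ht ht hIa (IsIso.id X)

lemma rightMinimal_of_leftMinimal' {A X B : C} {f : A ⟶ X} {g : X ⟶ B} {h : B ⟶ A⟦(1:ℤ)⟧}
    (ht : Triangle.mk f g h ∈ distTriang C)
    (hg : ∀ u : B ⟶ B, g ≫ u = g → IsIso u) :
    ∀ u : A ⟶ A, u ≫ f = f → IsIso u := by
  intro u hu
  obtain ⟨c, hc₁, hc₂⟩ := complete_distinguished_triangle_morphism _ _ ht ht u (𝟙 X)
    ((Category.comp_id f).trans hu.symm)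
  have hIc : IsIso c := hg c (hc₁.trans (Category.id_comp g))
  exact isIso₁_of_isIso₂₃ (T := Triangle.mk f g h) (T' := Triangle.mk f g h)
    { hom₁ := u, hom₂ := 𝟙 X, hom₃ := c,
      comm₁ := (Category.comp_id f).trans hu.symm
      comm₂ := hc₁
      comm₃ := hc₂ } ht ht (IsIso.id X) hIc


lemma mem_T2_of_min' [HasBinaryBiproducts C] [IsIdempotentComplete C]
    (T1 T2 : Set C) (htp : TorsionPair T1 T2)
    {A X B : C} {f : A ⟶ X} {g : X ⟶ B} {h : B ⟶ A⟦(1:ℤ)⟧}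
    (ht : Triangle.mk f g h ∈ distTriang C)
    (hA : A ∈ T1) (happ : IsRightApprox T1 f) (hmin : RightMinimal f) : B ∈ T2 := by
  obtain ⟨A₀, B₀, f₀, g₀, h₀, ht₀, hA₀, hB₀⟩ := htp.exists_triangle X
  obtain ⟨s, hs⟩ : ∃ s : A ⟶ A₀, f = s ≫ f₀ := Triangle.coyoneda_exact₂ _ ht₀ f (htp.hom_zero A hA B₀ hB₀ (f ≫ g₀))
  obtain ⟨t, hts⟩ : ∃ t : A₀ ⟶ A, t ≫ f = f₀ := happ A₀ hA₀ f₀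
  have hst : IsIso (s ≫ t) := hmin _ (by rw [Category.assoc, hts, ← hs])
  obtain ⟨σ, hσ₁, hσ₂⟩ : ∃ σ : B ⟶ B₀, g ≫ σ = 𝟙 X ≫ g₀ ∧ h ≫ (shiftFunctor C (1:ℤ)).map s = σ ≫ h₀ :=
    complete_distinguished_triangle_morphism _ _ ht ht₀ s (𝟙 X)
    ((Category.comp_id f).trans hs)
  obtain ⟨τ, hτ₁, hτ₂⟩ : ∃ τ : B₀ ⟶ B, g₀ ≫ τ = 𝟙 X ≫ g ∧ h₀ ≫ (shiftFunctor C (1:ℤ)).map t = τ ≫ h :=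
    complete_distinguished_triangle_morphism _ _ ht₀ ht t (𝟙 X)
    ((Category.comp_id f₀).trans hts.symm)
  have hIso : IsIso (σ ≫ τ) := by
    refine isIso₃_of_isIso₁₂ (T := Triangle.mk f g h) (T' := Triangle.mk f g h)
      { hom₁ := s ≫ t, hom₂ := 𝟙 X, hom₃ := σ ≫ τ,
        comm₁ := by change f ≫ 𝟙 X = (s ≫ t) ≫ f; rw [Category.comp_id, Category.assoc, hts, hs]
        comm₂ := by
          change g ≫ (σ ≫ τ) = 𝟙 X ≫ g
          rw [← Category.assoc, hσ₁, Category.id_comp, hτ₁]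
        comm₃ := by
          change h ≫ (shiftFunctor C (1:ℤ)).map (s ≫ t) = (σ ≫ τ) ≫ h
          rw [Functor.map_comp, ← Category.assoc, hσ₂, Category.assoc, hτ₂,
            Category.assoc]
      } ht ht hst (IsIso.id X)
  refine mem_of_retract' T2 htp.iso2 htp.summand2 σ (τ ≫ inv (σ ≫ τ)) ?_ hB₀
  rw [← Category.assoc]; exact IsIso.hom_inv_id _

lemma mem_T1_of_min' [HasBinaryBiproducts C] [IsIdempotentComplete C]
    (T1 T2 : Set C) (htp : TorsionPair T1 T2)
    {A X B : C} {f : A ⟶ X} {g : X ⟶ B} {h : B ⟶ A⟦(1:ℤ)⟧}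
    (ht : Triangle.mk f g h ∈ distTriang C)
    (hB : B ∈ T2) (happ : IsLeftApprox T2 g) (hmin : LeftMinimal g) : A ∈ T1 := by
  obtain ⟨A₀, B₀, f₀, g₀, h₀, ht₀, hA₀, hB₀⟩ := htp.exists_triangle X
  obtain ⟨s, hs⟩ : ∃ s : B₀ ⟶ B, g = g₀ ≫ s := Triangle.yoneda_exact₂ _ ht₀ g (htp.hom_zero A₀ hA₀ B hB (f₀ ≫ g))
  obtain ⟨t, hts⟩ : ∃ t : B ⟶ B₀, g ≫ t = g₀ := happ B₀ hB₀ g₀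
  have hst : IsIso (t ≫ s) := hmin _ (by rw [← Category.assoc, hts, ← hs])
  obtain ⟨a, ha₁, ha₂⟩ : ∃ a : A ⟶ A₀, f ≫ 𝟙 X = a ≫ f₀ ∧ h ≫ (shiftFunctor C (1:ℤ)).map a = t ≫ h₀ :=
    complete_distinguished_triangle_morphism₁ _ _ ht ht₀ (𝟙 X) t
    (hts.trans (Category.id_comp g₀).symm)
  obtain ⟨b, hb₁, hb₂⟩ : ∃ b : A₀ ⟶ A, f₀ ≫ 𝟙 X = b ≫ f ∧ h₀ ≫ (shiftFunctor C (1:ℤ)).map b = s ≫ h :=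
    complete_distinguished_triangle_morphism₁ _ _ ht₀ ht (𝟙 X) s
    (hs.symm.trans (Category.id_comp g).symm)
  have hIso : IsIso (a ≫ b) := by
    refine isIso₁_of_isIso₂₃ (T := Triangle.mk f g h) (T' := Triangle.mk f g h)
      { hom₁ := a ≫ b, hom₂ := 𝟙 X, hom₃ := t ≫ s,
        comm₁ := by
          change f ≫ 𝟙 X = (a ≫ b) ≫ f
          rw [Category.comp_id] at ha₁ hb₁
          rw [Category.comp_id, Category.assoc, ← hb₁, ← ha₁]
        comm₂ := by change g ≫ (t ≫ s) = 𝟙 X ≫ g; rw [← Category.assoc, hts, Category.id_comp]; exact hs.symm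
        comm₃ := by
          change h ≫ (shiftFunctor C (1:ℤ)).map (a ≫ b) = (t ≫ s) ≫ h
          rw [Functor.map_comp, ← Category.assoc, ha₂, Category.assoc, hb₂,
            Category.assoc]
      } ht ht (IsIso.id X) hst
  refine mem_of_retract' T1 htp.iso1 htp.summand1 a (b ≫ inv (a ≫ b)) ?_ hA₀
  rw [← Category.assoc]; exact IsIso.hom_inv_id _


/-- for a torsion pair `(T1,T2)` and a distinguished triangle
`A ⟶ X ⟶ B ⟶`, `A ∈ T1` with `f` a minimal right `T1`-approximation iff
`B ∈ T2` with `g` a minimal left `T2`-approximation. -/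
theorem torsionPair_minimal_tfae [IsTriangulated C] [HasBinaryBiproducts C] (k : Type*) [Field k] [Linear k C]
    (hfin : ∀ X Y : C, Module.Finite k (X ⟶ Y)) [IsIdempotentComplete C]
    (T1 T2 : Set C) (htp : TorsionPair T1 T2)
    (A X B : C) (f : A ⟶ X) (g : X ⟶ B) (h : B ⟶ A⟦(1:ℤ)⟧)
    (ht : Triangle.mk f g h ∈ (distTriang C)) :
    (A ∈ T1 ∧ IsRightApprox T1 f ∧ RightMinimal f) ↔
    (B ∈ T2 ∧ IsLeftApprox T2 g ∧ LeftMinimal g) := by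
  constructor
  · rintro ⟨hA, happ, hmin⟩
    refine ⟨mem_T2_of_min' T1 T2 htp ht hA happ hmin, ?_, ?_⟩
    · intro B' hB' u
      obtain ⟨v, hv⟩ := Triangle.yoneda_exact₂ _ ht u (htp.hom_zero A hA B' hB' (f ≫ u))
      exact ⟨v, hv.symm⟩
    · exact leftMinimal_of_rightMinimal' ht hmin
  · rintro ⟨hB, happ, hmin⟩
    refine ⟨mem_T1_of_min' T1 T2 htp ht hB happ hmin, ?_, rightMinimal_of_leftMinimal' ht hmin⟩
    intro A' hA' u
    obtain ⟨v, hv⟩ := Triangle.coyoneda_exact₂ _ ht u (htp.hom_zero A' hA' B hB (u ≫ g))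
    exact ⟨v, hv.symm⟩
end

section
/- In a Krull-Schmidt triangulated category, a (C,D)-triangle C →f X →g D → (with C ∈ C, D ∈ D, f a right C-approximation, g a left D-approximation coming from a torsion pair (C,D)) is necessarily minimal whenever C is indecomposable and f is nonzero (respectively, whenever D is indecomposable and g is nonzero). -/
open CategoryTheory Limits Pretriangulated

universe v u

variable {C : Type u} [Category.{v} C] [Preadditive C] [HasZeroObject C]
  [HasShift C ℤ] [∀ n : ℤ, (shiftFunctor C n).Additive] [Pretriangulated C]

/-- An object is indecomposable if it is nonzero and admits no decomposition into
two nonzero direct summands. -/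
def Indec [HasBinaryBiproducts C] (A : C) : Prop :=
  ¬ IsZero A ∧ ∀ (Y Z : C), (A ≅ Y ⊞ Z) → IsZero Y ∨ IsZero Z

/-- Auxiliary ring theory lemma. -/
theorem myAux_unit_or_nilpotent {k R : Type*} [Field k] [Ring R] [Algebra k R]
    [Module.Finite k R] (hid : ∀ e : R, e * e = e → e = 0 ∨ e = 1) (u : R) :
    IsUnit u ∨ IsNilpotent u := by
  classical
  set S := Algebra.adjoin k ({u} : Set R) with hS
  letI : CommRing S := Algebra.adjoinCommRingOfComm k (by
    rintro a rfl b rfl; rfl)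
  haveI : FiniteDimensional k S := FiniteDimensional.finiteDimensional_subalgebra S
  haveI : IsArtinian k S := isArtinian_of_fg_of_artinian'
  haveI : IsArtinian S S := isArtinian_of_tower k inferInstance
  set x : S := ⟨u, Algebra.subset_adjoin rfl⟩ with hx
  obtain ⟨n, y, hy⟩ := IsArtinian.exists_pow_succ_smul_dvd x (1 : S)
  rw [smul_eq_mul, smul_eq_mul, mul_one] at hy
  set m := n + 1 with hm
  rw [Nat.succ_eq_add_one] at hy
  have hrel : x ^ (m + 1) * y = x ^ m := by
    rw [hm]
    calc x ^ (n + 1 + 1) * y = x * (x ^ (n + 1) * y) := by ring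
      _ = x * x ^ n := by rw [hy]
      _ = x ^ (n + 1) := by ring
  have key : ∀ j : ℕ, x ^ (m + j) * y ^ j = x ^ m := by
    intro j
    induction j with
    | zero => simp
    | succ j ih =>
      have h1 : x ^ (m + (j + 1)) * y ^ (j + 1) = (x ^ (m + j) * y ^ j) * x * y := by
        ring
      rw [h1, ih]
      calc x ^ m * x * y = x ^ (m + 1) * y := by ring
        _ = x ^ m := hrel
  set e : S := (x * y) ^ m with he
  have hee : e * e = e := by
    have h1 : e * e = (x ^ (m + m) * y ^ m) * y ^ m := by rw [he]; ring
    rw [h1, key m, he]; ring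
  have hR : (e : R) * (e : R) = (e : R) := by
    rw [← Subalgebra.coe_mul, hee]
  rcases hid _ hR with h0 | h1
  · -- e = 0 : then x is nilpotent
    have he0 : e = 0 := Subtype.ext (by simpa using h0)
    right
    refine ⟨m, ?_⟩
    have hxm : x ^ m = 0 := by
      have : x ^ m = x ^ m * e := by
        rw [he]
        calc x ^ m = x ^ (m + m) * y ^ m := (key m).symm
          _ = x ^ m * (x * y) ^ m := by ring
      rw [this, he0, mul_zero]
    calc u ^ m = ((x ^ m : S) : R) := by rw [SubmonoidClass.coe_pow]
      _ = ((0 : S) : R) := by rw [hxm]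
      _ = 0 := by simp
  · -- e = 1 : then x is a unit
    have he1 : e = 1 := Subtype.ext (by simpa using h1)
    left
    have hunit : x * (x ^ n * y ^ m) = 1 := by
      calc x * (x ^ n * y ^ m) = (x * y) ^ m := by rw [hm]; ring
        _ = 1 := by rw [← he, he1]
    have : IsUnit x := IsUnit.of_mul_eq_one _ hunit
    exact this.map S.val

section MyAux

variable {C : Type u} [Category.{v} C] [Preadditive C] [HasZeroObject C]
  [HasShift C ℤ] [∀ n : ℤ, (shiftFunctor C n).Additive] [Pretriangulated C]

/-- For an indecomposable object in an idempotent complete category with biproducts,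
every idempotent endomorphism is 0 or the identity. -/
theorem myAux_idem_trivial [HasBinaryBiproducts C] [IsIdempotentComplete C]
    {A : C} (hA : Indec A) (e : A ⟶ A) (he : e ≫ e = e) : e = 0 ∨ e = 𝟙 A := by
  obtain ⟨Y, iY, pY, hYid, hYe⟩ := IsIdempotentComplete.idempotents_split A e he
  have he' : (𝟙 A - e) ≫ (𝟙 A - e) = 𝟙 A - e := by
    simp [Preadditive.sub_comp, Preadditive.comp_sub, he]
  obtain ⟨Z, iZ, pZ, hZid, hZe⟩ := IsIdempotentComplete.idempotents_split A (𝟙 A - e) he'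
  have hiYpZ : iY ≫ pZ = 0 := by
    have h1 : iY ≫ (𝟙 A - e) = 0 := by
      simp [Preadditive.comp_sub, ← hYe, ← Category.assoc, hYid]
    calc iY ≫ pZ = iY ≫ pZ ≫ (iZ ≫ pZ) := by rw [hZid]; simp
      _ = (iY ≫ (𝟙 A - e)) ≫ pZ := by rw [← hZe]; simp only [Category.assoc]
      _ = 0 := by rw [h1, Limits.zero_comp]
  have hiZpY : iZ ≫ pY = 0 := by
    have h1 : iZ ≫ e = 0 := by
      have h2 : iZ ≫ (𝟙 A - e) = iZ := by
        calc iZ ≫ (𝟙 A - e) = iZ ≫ pZ ≫ iZ := by rw [hZe]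
          _ = iZ := by rw [← Category.assoc, hZid, Category.id_comp]
      have := h2
      rw [Preadditive.comp_sub, Category.comp_id, sub_eq_self] at this
      exact this
    calc iZ ≫ pY = iZ ≫ pY ≫ (iY ≫ pY) := by rw [hYid]; simp
      _ = (iZ ≫ e) ≫ pY := by rw [← hYe]; simp only [Category.assoc]
      _ = 0 := by rw [h1, Limits.zero_comp]
  let φ : A ≅ Y ⊞ Z :=
    { hom := biprod.lift pY pZ
      inv := biprod.desc iY iZ
      hom_inv_id := by
        rw [biprod.lift_desc, hYe, hZe]; abel
      inv_hom_id := by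
        apply biprod.hom_ext' <;> apply biprod.hom_ext <;>
          simp [hYid, hZid, hiYpZ, hiZpY] }
  rcases hA.2 Y Z φ with hY | hZ
  · left
    have : iY = 0 := hY.eq_of_src iY 0
    rw [← hYe, this, Limits.comp_zero]
  · right
    have : iZ = 0 := hZ.eq_of_src iZ 0
    have h0 : 𝟙 A - e = 0 := by rw [← hZe, this, Limits.comp_zero]
    rw [sub_eq_zero] at h0
    exact h0.symm

/-- For an indecomposable object, every endomorphism is invertible or
`𝟙 - u` is invertible. -/
theorem myAux_iso_or_iso (k : Type*) [Field k] [Linear k C]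
    (hfin : ∀ X Y : C, Module.Finite k (X ⟶ Y))
    [HasBinaryBiproducts C] [IsIdempotentComplete C]
    {A : C} (hA : Indec A) (u : A ⟶ A) : IsIso u ∨ IsIso (𝟙 A - u) := by
  haveI : Module.Finite k (End A) := hfin A A
  have hid : ∀ e : End A, e * e = e → e = 0 ∨ e = 1 := by
    intro e he
    exact myAux_idem_trivial hA e (by simpa [End.mul_def] using he)
  rcases myAux_unit_or_nilpotent (k := k) hid (u : End A) with h | h
  · left
    exact (isUnit_iff_isIso u).mp h
  · right
    let u' : End A := u
    have : IsUnit ((1 : End A) - u') := h.isUnit_one_sub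
    have h2 : IsIso ((1 : End A) - u') := (isUnit_iff_isIso _).mp this
    have h3 : (𝟙 A - u : A ⟶ A) = ((1 : End A) - u' : End A) := rfl
    rw [h3]
    exact h2

end MyAux

/-- a `(T1,T2)`-triangle is minimal whenever `A` is indecomposable
and `f ≠ 0` (respectively, `B` indecomposable and `g ≠ 0`). -/
theorem torsionPair_triangle_minimal [IsTriangulated C] [HasBinaryBiproducts C] (k : Type*) [Field k] [Linear k C]
    (hfin : ∀ X Y : C, Module.Finite k (X ⟶ Y)) [IsIdempotentComplete C]
    (T1 T2 : Set C) (htp : TorsionPair T1 T2)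
    (A X B : C) (f : A ⟶ X) (g : X ⟶ B) (h : B ⟶ A⟦(1:ℤ)⟧)
    (ht : Triangle.mk f g h ∈ (distTriang C)) (hA : A ∈ T1) (hB : B ∈ T2) :
    (Indec A → f ≠ 0 → RightMinimal f) ∧
    (Indec B → g ≠ 0 → LeftMinimal g) := by
  constructor
  · intro hind hf u hu
    have h0 : (𝟙 A - u) ≫ f = 0 := by
      rw [Preadditive.sub_comp, Category.id_comp, hu, sub_self]
    rcases myAux_iso_or_iso k hfin hind u with hiso | hiso
    · exact hiso
    · exfalso
      apply hf
      calc f = inv (𝟙 A - u) ≫ ((𝟙 A - u) ≫ f) := by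
              rw [← Category.assoc, IsIso.inv_hom_id, Category.id_comp]
        _ = 0 := by rw [h0, Limits.comp_zero]
  · intro hind hg u hu
    have h0 : g ≫ (𝟙 B - u) = 0 := by
      rw [Preadditive.comp_sub, Category.comp_id, hu, sub_self]
    rcases myAux_iso_or_iso k hfin hind u with hiso | hiso
    · exact hiso
    · exfalso
      apply hg
      calc g = (g ≫ (𝟙 B - u)) ≫ inv (𝟙 B - u) := by
              rw [Category.assoc, IsIso.hom_inv_id, Category.comp_id]
        _ = 0 := by rw [h0, Limits.zero_comp]
end

section
/- With T having Serre functor ν, S a simple-minded system, X ⊆ S with ν(X[1]) = X, define α = a ∘ [-1] and β = d ∘ [1], where a comes from the torsion pair (^⊥X, F(X)) and d from (F(X), X^⊥). Then for any M ∈ ^⊥X ∩ X^⊥ one has βαM ≅ M ≅ αβM. -/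
open CategoryTheory Limits Pretriangulated

universe v u

variable {C : Type u} [Category.{v} C] [Preadditive C] [HasZeroObject C]
  [HasShift C ℤ] [∀ n : ℤ, (shiftFunctor C n).Additive] [Pretriangulated C]

variable (k : Type*) [Field k] [Linear k C]

/-- `e` is a Serre duality for the auto-equivalence `ν`: natural `k`-linear
isomorphisms `Hom(X,Y) ≅ D Hom(Y, νX)`. -/
def SerreDuality (ν : C ⥤ C)
    (e : ∀ X Y : C, (X ⟶ Y) ≃ₗ[k] Module.Dual k (Y ⟶ ν.obj X)) : Prop :=
  (∀ (X' X Y : C) (u : X' ⟶ X) (g : X ⟶ Y) (h : Y ⟶ ν.obj X'),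
      e X' Y (u ≫ g) h = e X Y g (h ≫ ν.map u)) ∧
  (∀ (X Y Y' : C) (g : X ⟶ Y) (v : Y ⟶ Y') (h : Y' ⟶ ν.obj X),
      e X Y' (g ≫ v) h = e X Y g (v ≫ h))

/-- A class of objects `X` is stable under `ν ∘ [1]` (up to isomorphism):
`ν(X[1]) = X`. -/
def NuShiftStable (ν : C ⥤ C) (X : Set C) : Prop :=
  (∀ Y ∈ X, ∃ Z ∈ X, Nonempty (ν.obj (Y⟦(1:ℤ)⟧) ≅ Z)) ∧
  (∀ Z ∈ X, ∃ Y ∈ X, Nonempty (ν.obj (Y⟦(1:ℤ)⟧) ≅ Z))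

section Aux

/-- Maps out of the filtration closure vanish if maps out of the generators vanish. -/
lemma filt_src_zero (P : Set C) (Y : C) (hP : ∀ A ∈ P, ∀ u : A ⟶ Y, u = 0) :
    ∀ B ∈ filtClosure P, ∀ u : B ⟶ Y, u = 0 := by
  rintro B ⟨n, hB⟩
  induction n generalizing B with
  | zero => exact fun u => hB.eq_of_src u 0
  | succ n ih =>
    obtain ⟨A, Cc, a, b, c, hT, hA, hC⟩ := hB
    intro u
    obtain ⟨v, rfl⟩ := Triangle.yoneda_exact₂ _ hT u (ih A hA _)
    have hv : v = 0 := by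
      rcases hC with h | h
      · exact hP _ h v
      · exact h.eq_of_src v 0
    rw [hv]; exact comp_zero

/-- Maps into the filtration closure vanish if maps into the generators vanish. -/
lemma filt_tgt_zero (P : Set C) (Y : C) (hP : ∀ A ∈ P, ∀ u : Y ⟶ A, u = 0) :
    ∀ B ∈ filtClosure P, ∀ u : Y ⟶ B, u = 0 := by
  rintro B ⟨n, hB⟩
  induction n generalizing B with
  | zero => exact fun u => hB.eq_of_tgt u 0
  | succ n ih =>
    obtain ⟨A, Cc, a, b, c, hT, hA, hC⟩ := hB
    intro u
    have h2 : u ≫ (Triangle.mk a b c).mor₂ = 0 := by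
      rcases hC with h | h
      · exact hP _ h _
      · exact h.eq_of_tgt _ 0
    obtain ⟨v, hv⟩ := Triangle.coyoneda_exact₂ _ hT u h2
    rw [hv, ih A hA v]; exact zero_comp

lemma shift_map_zero {A B : C} (n : ℤ) (f : A ⟶ B)
    (h : (shiftFunctor C n).map f = 0) : f = 0 :=
  (shiftFunctor C n).map_injective (by rw [h, Functor.map_zero])

end Aux

/-- for `M ∈ ^⊥X ∩ X^⊥`, one has `βαM ≅ M ≅ αβM`, where
`α = a ∘ [-1]` comes from the torsion pair `(^⊥X, F(X))` and `β = d ∘ [1]` from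
`(F(X), X^⊥)`. -/
theorem beta_alpha_iso [IsTriangulated C] [HasBinaryBiproducts C] (ν : C ⥤ C) [ν.IsEquivalence] [ν.CommShift ℤ] [ν.IsTriangulated]
    (e : ∀ X Y : C, (X ⟶ Y) ≃ₗ[k] Module.Dual k (Y ⟶ ν.obj X))
    (he : SerreDuality k ν e) (hfin : ∀ X Y : C, Module.Finite k (X ⟶ Y)) [IsIdempotentComplete C]
    (S X : Set C) (hS : SimpleMindedSystem S) (hX : X ⊆ S)
    (hstab : NuShiftStable ν X)
    (M : C) (hM1 : M ∈ leftOrth X) (hM2 : M ∈ rightOrth X) :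
    (∀ (A B Z D : C) (f : A ⟶ M⟦(-1:ℤ)⟧) (g : M⟦(-1:ℤ)⟧ ⟶ B) (h : B ⟶ A⟦(1:ℤ)⟧)
        (f' : Z ⟶ A⟦(1:ℤ)⟧) (g' : A⟦(1:ℤ)⟧ ⟶ D) (h' : D ⟶ Z⟦(1:ℤ)⟧),
      MinTriangle (leftOrth X) (filtClosure X) f g h →
      MinTriangle (filtClosure X) (rightOrth X) f' g' h' →
      Nonempty (D ≅ M)) ∧
    (∀ (Z D A B : C) (f : Z ⟶ M⟦(1:ℤ)⟧) (g : M⟦(1:ℤ)⟧ ⟶ D) (h : D ⟶ Z⟦(1:ℤ)⟧)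
        (f' : A ⟶ D⟦(-1:ℤ)⟧) (g' : D⟦(-1:ℤ)⟧ ⟶ B) (h' : B ⟶ A⟦(1:ℤ)⟧),
      MinTriangle (filtClosure X) (rightOrth X) f g h →
      MinTriangle (leftOrth X) (filtClosure X) f' g' h' →
      Nonempty (A ≅ M)) := by
  have hMX : ∀ X' ∈ X, ∀ u : M ⟶ X', u = 0 := hM1
  have hXM : ∀ X' ∈ X, ∀ u : X' ⟶ M, u = 0 := hM2
  -- Serre duality vanishing: `Hom(X'⟦1⟧, M) = 0`
  have hshift1 : ∀ X' ∈ X, ∀ u : X'⟦(1:ℤ)⟧ ⟶ M, u = 0 := by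
    intro X' hX' u
    obtain ⟨Z', hZ', ⟨i⟩⟩ := hstab.1 X' hX'
    have hzero : ∀ g : M ⟶ ν.obj (X'⟦(1:ℤ)⟧), g = 0 := by
      intro g
      have h0 : g ≫ i.hom = 0 := hMX Z' hZ' _
      have h1 : g = (g ≫ i.hom) ≫ i.inv := by simp
      rw [h1, h0, zero_comp]
    have he0 : e (X'⟦(1:ℤ)⟧) M u = 0 := by
      apply LinearMap.ext
      intro g
      rw [hzero g, map_zero, LinearMap.zero_apply]
    exact (e (X'⟦(1:ℤ)⟧) M).injective (by rw [he0, map_zero])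
  -- Serre duality vanishing: `Hom(M, X'⟦-1⟧) = 0`
  have hshiftm1 : ∀ X' ∈ X, ∀ u : M ⟶ X'⟦(-1:ℤ)⟧, u = 0 := by
    intro X' hX' u
    obtain ⟨Y', hY', ⟨i⟩⟩ := hstab.2 X' hX'
    have j : ν.obj Y' ≅ X'⟦(-1:ℤ)⟧ :=
      ν.mapIso (((shiftFunctorCompIsoId C (1:ℤ) (-1:ℤ) (by ring)).app Y').symm) ≪≫
        (ν.commShiftIso (-1:ℤ)).app (Y'⟦(1:ℤ)⟧) ≪≫ (shiftFunctor C (-1:ℤ)).mapIso i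
    have hzero : ∀ g : M ⟶ ν.obj Y', g = 0 := by
      intro g
      refine (Module.forall_dual_apply_eq_zero_iff k g).mp ?_
      intro ξ
      have h1 : (e Y' M).symm ξ = 0 := hXM Y' hY' _
      have h2 : ξ = 0 := by
        have h3 := (e Y' M).apply_symm_apply ξ
        rw [h1, map_zero] at h3
        exact h3.symm
      rw [h2, LinearMap.zero_apply]
    have h3 : u ≫ j.inv = 0 := hzero _
    have h4 : u = (u ≫ j.inv) ≫ j.hom := by simp
    rw [h4, h3, zero_comp]
  constructor
  · -- Part 1 : `β (α M) ≅ M`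
    rintro A B Z D f g h f' g' h' ⟨ht, hA, hB, -, -⟩ ⟨ht', hZ, hD, -, hmin⟩
    have iso1 : (M⟦(-1:ℤ)⟧)⟦(1:ℤ)⟧ ≅ M :=
      (shiftFunctorCompIsoId C (-1:ℤ) (1:ℤ) (by ring)).app M
    set T1r := (Triangle.mk f g h).rotate.rotate with hT1rdef
    have hT1r : T1r ∈ distTriang C := rot_of_distTriang _ (rot_of_distTriang _ ht)
    set T2 := Triangle.mk f' g' h' with hT2def
    have hT2 : T2 ∈ distTriang C := ht'
    -- maps `B ⟶ D` vanish
    have hBD : ∀ u : B ⟶ D, u = 0 := fun u => filt_src_zero X D hD B hB u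
    -- maps `Z ⟶ M⟦-1⟧⟦1⟧` vanish
    have hXM' : ∀ X' ∈ X, ∀ u : X' ⟶ T1r.obj₃, u = 0 := by
      intro X' hX' u
      have h0 : u ≫ iso1.hom = 0 := hXM X' hX' _
      have h1 : u = (u ≫ iso1.hom) ≫ iso1.inv := by erw [Category.assoc, iso1.hom_inv_id, Category.comp_id]
      rw [h1, h0]; exact zero_comp
    have hZM' : ∀ u : Z ⟶ T1r.obj₃, u = 0 := fun u => filt_src_zero X _ hXM' Z hZ u
    -- maps `B⟦1⟧ ⟶ M⟦-1⟧⟦1⟧` vanish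
    have hXm1 : ∀ X' ∈ X, ∀ u : X' ⟶ (T1r.obj₃)⟦(-1:ℤ)⟧, u = 0 := by
      intro X' hX' u
      apply shift_map_zero (1:ℤ)
      have isoA : (T1r.obj₃)⟦(-1:ℤ)⟧⟦(1:ℤ)⟧ ≅ M :=
        (shiftFunctorCompIsoId C (-1:ℤ) (1:ℤ) (by ring)).app (T1r.obj₃) ≪≫ iso1
      have h0 : (shiftFunctor C (1:ℤ)).map u ≫ isoA.hom = 0 := hshift1 X' hX' _
      have h1 : (shiftFunctor C (1:ℤ)).map u =
          ((shiftFunctor C (1:ℤ)).map u ≫ isoA.hom) ≫ isoA.inv := by simp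
      rw [h1, h0, zero_comp]
    have hFm1 : ∀ u : B ⟶ (T1r.obj₃)⟦(-1:ℤ)⟧, u = 0 :=
      fun u => filt_src_zero X _ hXm1 B hB u
    have hB1M' : ∀ u : (T1r.obj₁)⟦(1:ℤ)⟧ ⟶ T1r.obj₃, u = 0 := by
      intro u
      apply shift_map_zero (-1:ℤ)
      have h0 : ((shiftFunctorCompIsoId C (1:ℤ) (-1:ℤ) (by ring)).app B).inv ≫
          (shiftFunctor C (-1:ℤ)).map u = 0 := hFm1 _
      have h1 : (shiftFunctor C (-1:ℤ)).map u =
          ((shiftFunctorCompIsoId C (1:ℤ) (-1:ℤ) (by ring)).app B).hom ≫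
            (((shiftFunctorCompIsoId C (1:ℤ) (-1:ℤ) (by ring)).app B).inv ≫
              (shiftFunctor C (-1:ℤ)).map u) := by simp; rfl
      rw [h1, h0]; exact comp_zero
    -- factor `g'` through `T1r.mor₂`
    obtain ⟨φ, hφ⟩ := Triangle.yoneda_exact₂ T1r hT1r
      (show T1r.obj₂ ⟶ D from g') (hBD _)
    -- factor `T1r.mor₂` through `g'`
    obtain ⟨ψ, hψ⟩ := Triangle.yoneda_exact₂ T2 hT2
      (show T2.obj₂ ⟶ T1r.obj₃ from T1r.mor₂) (hZM' _)
    have hψ' : T1r.mor₂ = g' ≫ ψ := hψ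
    have hφψ : φ ≫ ψ = 𝟙 (T1r.obj₃) := by
      have hc : T1r.rotate.mor₁ ≫ (φ ≫ ψ - 𝟙 (T1r.obj₃)) = 0 := by
        show T1r.mor₂ ≫ (φ ≫ ψ - 𝟙 (T1r.obj₃)) = 0
        erw [Preadditive.comp_sub, Category.comp_id, ← Category.assoc, ← hφ, ← hψ', sub_self]
      obtain ⟨v, hv⟩ := Triangle.yoneda_exact₂ T1r.rotate (rot_of_distTriang _ hT1r)
        (φ ≫ ψ - 𝟙 (T1r.obj₃)) hc
      erw [hB1M' v, comp_zero] at hv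
      exact sub_eq_zero.mp hv
    have hρcomm : T2.mor₂ ≫ (ψ ≫ φ) = 𝟙 T2.obj₂ ≫ T2.mor₂ := by
      show g' ≫ (ψ ≫ φ) = 𝟙 T2.obj₂ ≫ g'
      erw [Category.id_comp, ← Category.assoc, ← hψ', ← hφ]
    obtain ⟨τ, hτ1, hτ2⟩ := complete_distinguished_triangle_morphism₁ T2 T2 hT2 hT2
      (𝟙 T2.obj₂) (ψ ≫ φ) hρcomm
    have hτf : IsIso τ := by
      apply hmin τ
      have h5 := hτ1.symm
      rw [Category.comp_id] at h5
      exact h5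
    have hρiso : IsIso (ψ ≫ φ) := by
      exact isIso₃_of_isIso₁₂
        ({ hom₁ := τ, hom₂ := 𝟙 T2.obj₂, hom₃ := ψ ≫ φ,
           comm₁ := hτ1, comm₂ := hρcomm, comm₃ := hτ2 } : T2 ⟶ T2)
        hT2 hT2 hτf inferInstance
    have hρ1 : ψ ≫ φ = 𝟙 T2.obj₃ := by
      have h6 : (ψ ≫ φ) ≫ 𝟙 T2.obj₃ = ψ ≫ φ := Category.comp_id _
      have hc : (ψ ≫ φ) ≫ (ψ ≫ φ) = (ψ ≫ φ) ≫ 𝟙 T2.obj₃ := by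
        rw [h6]
        calc (ψ ≫ φ) ≫ ψ ≫ φ = ψ ≫ (φ ≫ ψ) ≫ φ := by simp only [Category.assoc]; erw [Category.assoc]
          _ = ψ ≫ φ := by rw [hφψ, Category.id_comp]
      exact (cancel_epi (ψ ≫ φ)).mp hc
    have hψiso : IsIso ψ := ⟨φ, hρ1, hφψ⟩
    exact ⟨@asIso _ _ _ _ ψ hψiso ≪≫ iso1⟩
  · -- Part 2 : `α (β M) ≅ M`
    rintro Z D A B f g h f' g' h' ⟨ht, hZ, hD, -, -⟩ ⟨ht', hA, hB, -, hmin⟩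
    have iso2 : (M⟦(1:ℤ)⟧)⟦(-1:ℤ)⟧ ≅ M :=
      (shiftFunctorCompIsoId C (1:ℤ) (-1:ℤ) (by ring)).app M
    set Ta := (Triangle.mk f g h).invRotate.invRotate with hTadef
    have hTa : Ta ∈ distTriang C := inv_rot_of_distTriang _ (inv_rot_of_distTriang _ ht)
    set Tb := Triangle.mk f' g' h' with hTbdef
    have hTb : Tb ∈ distTriang C := ht'
    -- maps `A ⟶ Z` vanish
    have hAZ : ∀ u : A ⟶ Z, u = 0 := fun u => filt_tgt_zero X A hA Z hZ u
    -- maps `M⟦1⟧⟦-1⟧ ⟶ B` vanish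
    have hM''X : ∀ X' ∈ X, ∀ u : Ta.obj₁ ⟶ X', u = 0 := by
      intro X' hX' u
      have h0 : iso2.inv ≫ u = 0 := hMX X' hX' _
      have h1 : u = iso2.hom ≫ (iso2.inv ≫ u) := by erw [← Category.assoc, iso2.hom_inv_id, Category.id_comp]
      rw [h1, h0]; exact comp_zero
    have hM''B : ∀ u : Ta.obj₁ ⟶ B, u = 0 := fun u => filt_tgt_zero X _ hM''X B hB u
    -- maps `M⟦1⟧⟦-1⟧ ⟶ Z⟦-1⟧` vanish
    have hM''Xm1 : ∀ X' ∈ X, ∀ u : (Ta.obj₁)⟦(1:ℤ)⟧ ⟶ X', u = 0 := by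
      intro X' hX' u
      apply shift_map_zero (-1:ℤ)
      have h0 : iso2.inv ≫ ((shiftFunctorCompIsoId C (1:ℤ) (-1:ℤ) (by ring)).app Ta.obj₁).inv ≫
          (shiftFunctor C (-1:ℤ)).map u = 0 := hshiftm1 X' hX' _
      have h1 : (shiftFunctor C (-1:ℤ)).map u =
          ((shiftFunctorCompIsoId C (1:ℤ) (-1:ℤ) (by ring)).app Ta.obj₁).hom ≫ iso2.hom ≫
            (iso2.inv ≫ ((shiftFunctorCompIsoId C (1:ℤ) (-1:ℤ) (by ring)).app Ta.obj₁).inv ≫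
              (shiftFunctor C (-1:ℤ)).map u) := by simp; erw [iso2.hom_inv_id_assoc, Iso.hom_inv_id_app_assoc]
      rw [h1, h0]; erw [comp_zero, comp_zero]
    have hM''FX1 : ∀ u : (Ta.obj₁)⟦(1:ℤ)⟧ ⟶ Z, u = 0 :=
      fun u => filt_tgt_zero X _ hM''Xm1 Z hZ u
    have hM''Zm1 : ∀ u : Ta.obj₁ ⟶ Z⟦(-1:ℤ)⟧, u = 0 := by
      intro u
      apply shift_map_zero (1:ℤ)
      have h0 : (shiftFunctor C (1:ℤ)).map u ≫
          ((shiftFunctorCompIsoId C (-1:ℤ) (1:ℤ) (by ring)).app Z).hom = 0 := hM''FX1 _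
      have h1 : (shiftFunctor C (1:ℤ)).map u =
          ((shiftFunctor C (1:ℤ)).map u ≫
            ((shiftFunctorCompIsoId C (-1:ℤ) (1:ℤ) (by ring)).app Z).hom) ≫
              ((shiftFunctorCompIsoId C (-1:ℤ) (1:ℤ) (by ring)).app Z).inv := by simp
      rw [h1, h0, zero_comp]
    -- factor `f'` through `Ta.mor₁`
    obtain ⟨φ, hφ⟩ := Triangle.coyoneda_exact₂ Ta hTa
      (show A ⟶ Ta.obj₂ from f') (hAZ _)
    -- factor `Ta.mor₁` through `f'`
    obtain ⟨ψ, hψ⟩ := Triangle.coyoneda_exact₂ Tb hTb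
      (show Ta.obj₁ ⟶ Tb.obj₂ from Ta.mor₁) (hM''B _)
    have hψ' : Ta.mor₁ = ψ ≫ f' := hψ
    have hψφ : ψ ≫ φ = 𝟙 Ta.obj₁ := by
      have hc : (ψ ≫ φ - 𝟙 Ta.obj₁) ≫ Ta.invRotate.mor₂ = 0 := by
        show (ψ ≫ φ - 𝟙 Ta.obj₁) ≫ Ta.mor₁ = 0
        erw [Preadditive.sub_comp, Category.id_comp, Category.assoc, ← hφ, ← hψ', sub_self]
      obtain ⟨v, hv⟩ := Triangle.coyoneda_exact₂ Ta.invRotate (inv_rot_of_distTriang _ hTa)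
        (ψ ≫ φ - 𝟙 Ta.obj₁) hc
      erw [hM''Zm1 v, zero_comp] at hv
      exact sub_eq_zero.mp hv
    have hσiso : IsIso (φ ≫ ψ) := by
      apply hmin
      erw [Category.assoc, ← hψ', ← hφ]
    have hσ1 : φ ≫ ψ = 𝟙 Tb.obj₁ := by
      have h6 : (φ ≫ ψ) ≫ 𝟙 Tb.obj₁ = φ ≫ ψ := Category.comp_id _
      have hc : (φ ≫ ψ) ≫ (φ ≫ ψ) = (φ ≫ ψ) ≫ 𝟙 Tb.obj₁ := by
        rw [h6]
        calc (φ ≫ ψ) ≫ φ ≫ ψ = φ ≫ (ψ ≫ φ) ≫ ψ := by simp only [Category.assoc]; erw [Category.assoc]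
          _ = φ ≫ ψ := by rw [hψφ, Category.id_comp]
      exact (cancel_epi (φ ≫ ψ)).mp hc
    have hφiso : IsIso φ := ⟨ψ, hσ1, hψφ⟩
    exact ⟨asIso φ ≪≫ iso2⟩
end

section
/- Let (^⊥X, F(X)) be the torsion pair associated to X ⊆ S (S a simple-minded system in T with Serre functor ν, ν(X[1]) = X). For any minimal triangle aM →f M →g bM → and any X ∈ X: (a) composition with g gives an isomorphism Hom(bM, X) ≅ Hom(M, X); (b) composition with f gives a monomorphism Hom(X, aM) → Hom(X, M); (c) if M ∈ X^⊥ then aM ∈ ^⊥X ∩ X^⊥. -/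
open CategoryTheory Limits Pretriangulated

universe v u

variable {C : Type u} [Category.{v} C] [Preadditive C] [HasZeroObject C]
  [HasShift C ℤ] [∀ n : ℤ, (shiftFunctor C n).Additive] [Pretriangulated C]

variable (k : Type*) [Field k] [Linear k C]

/-- Key lemma: if `f : A ⟶ M` is a minimal right `^⊥X`-approximation with
`A ∈ ^⊥X`, then for any `Y ∈ X` every map `c : Y ⟶ A` with `c ≫ f = 0`
vanishes. -/
theorem key_lemma_min_approx (ν : C ⥤ C)
    (e : ∀ X Y : C, (X ⟶ Y) ≃ₗ[k] Module.Dual k (Y ⟶ ν.obj X))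
    (he : SerreDuality k ν e)
    (S X : Set C) (hS : SimpleMindedSystem S) (hX : X ⊆ S)
    (hstab : NuShiftStable ν X)
    (A M : C) (f : A ⟶ M)
    (hA : A ∈ leftOrth X) (happ : IsRightApprox (leftOrth X) f)
    (hminf : RightMinimal f)
    (Y : C) (hY : Y ∈ X) (c : Y ⟶ A) (hcf : c ≫ f = 0) : c = 0 := by
  by_contra hc
  obtain ⟨Cn, p, q, hT⟩ := Pretriangulated.distinguished_cocone_triangle c
  -- every map `Y⟦1⟧ ⟶ Cn` composes to zero with `q`
  have hsq : ∀ s : Y⟦(1:ℤ)⟧ ⟶ Cn, s ≫ q = 0 := by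
    intro s
    by_contra hs
    obtain ⟨ψ, hψ⟩ := (shiftFunctor C (1:ℤ)).map_surjective (s ≫ q)
    have hψ0 : ψ ≠ 0 := by
      rintro rfl
      rw [Functor.map_zero] at hψ
      exact hs hψ.symm
    have hiso : IsIso ψ := (hS.1.1 Y (hX hY)).2 ψ hψ0
    have hiso2 : IsIso (s ≫ q) := by rw [← hψ]; infer_instance
    have hq : q ≫ (shiftFunctor C (1:ℤ)).map c = 0 :=
      Pretriangulated.comp_distTriang_mor_zero₃₁ _ hT
    have hmc : (shiftFunctor C (1:ℤ)).map c = 0 := by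
      calc (shiftFunctor C (1:ℤ)).map c
          = inv (s ≫ q) ≫ (s ≫ q) ≫ (shiftFunctor C (1:ℤ)).map c := by
            rw [IsIso.inv_hom_id_assoc]
        _ = inv (s ≫ q) ≫ s ≫ (q ≫ (shiftFunctor C (1:ℤ)).map c) := by
            simp only [Category.assoc]
        _ = 0 := by rw [hq, comp_zero, comp_zero]
    exact hc ((shiftFunctor C (1:ℤ)).map_injective (by rw [hmc, Functor.map_zero]))
  -- the cone lies in `^⊥X`
  have hCn : Cn ∈ leftOrth X := by
    intro X' hX' u
    have hpu : p ≫ u = 0 := hA X' hX' (p ≫ u)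
    obtain ⟨t, ht⟩ := Pretriangulated.Triangle.yoneda_exact₃ _ hT u hpu
    obtain ⟨Z, hZ, ⟨ι⟩⟩ := hstab.1 Y hY
    by_cases hXZ : X' = Z
    · subst hXZ
      have hqt' : q ≫ (t ≫ ι.inv) = 0 := by
        rw [← Module.forall_dual_apply_eq_zero_iff k (q ≫ (t ≫ ι.inv))]
        intro φ
        have hφ : e (Y⟦(1:ℤ)⟧) Cn ((e (Y⟦(1:ℤ)⟧) Cn).symm φ) = φ :=
          (e (Y⟦(1:ℤ)⟧) Cn).apply_symm_apply φ
        set s := (e (Y⟦(1:ℤ)⟧) Cn).symm φ with hsdef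
        calc φ (q ≫ (t ≫ ι.inv)) = e (Y⟦(1:ℤ)⟧) Cn s (q ≫ (t ≫ ι.inv)) := by
              rw [hφ]
          _ = e (Y⟦(1:ℤ)⟧) (Y⟦(1:ℤ)⟧) (s ≫ q) (t ≫ ι.inv) :=
              (he.2 (Y⟦(1:ℤ)⟧) Cn (Y⟦(1:ℤ)⟧) s q (t ≫ ι.inv)).symm
          _ = e (Y⟦(1:ℤ)⟧) (Y⟦(1:ℤ)⟧) 0 (t ≫ ι.inv) := by rw [hsq s]
          _ = 0 := by rw [map_zero]; rfl
      have : u = (q ≫ (t ≫ ι.inv)) ≫ ι.hom := by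
        rw [ht]; exact congrArg (fun x => q ≫ x) (show t = (t ≫ ι.inv) ≫ ι.hom by simp) |>.trans (Category.assoc _ _ _).symm
      rw [this, hqt', zero_comp]
    · have hzero : ∀ m : X' ⟶ ν.obj (Y⟦(1:ℤ)⟧), m = 0 := by
        intro m
        have h1 : m ≫ ι.hom = 0 := hS.1.2 X' (hX hX') Z (hX hZ) hXZ (m ≫ ι.hom)
        calc m = (m ≫ ι.hom) ≫ ι.inv := by simp
          _ = 0 := by rw [h1, zero_comp]
      have ht0 : t = 0 := by
        apply (e (Y⟦(1:ℤ)⟧) X').injective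
        erw [map_zero]
        ext m
        rw [hzero m, map_zero]
        simp
      rw [ht, ht0, comp_zero]; rfl
  -- `f` factors through `p`
  obtain ⟨m, hm⟩ := Pretriangulated.Triangle.yoneda_exact₂ _ hT f hcf
  obtain ⟨s, hsf⟩ := happ Cn hCn m
  have hps : (p ≫ s) ≫ f = f := by
    rw [Category.assoc, hsf]
    exact hm.symm
  have hiso : IsIso (p ≫ s) := hminf (p ≫ s) hps
  have hcp : c ≫ p = 0 := Pretriangulated.comp_distTriang_mor_zero₁₂ _ hT
  apply hc
  calc c = (c ≫ (p ≫ s)) ≫ inv (p ≫ s) := by simp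
    _ = ((c ≫ p) ≫ s) ≫ inv (p ≫ s) := by simp only [Category.assoc]
    _ = 0 := by rw [hcp, zero_comp, zero_comp]

/-- for a minimal `(^⊥X, F(X))`-triangle `aM →f M →g bM →` and
`X₁ ∈ X`: (a) `Hom(bM, X₁) ≅ Hom(M, X₁)` via `g`; (b) `Hom(X₁, aM) → Hom(X₁, M)`
via `f` is injective; (c) if `M ∈ X^⊥` then `aM ∈ ^⊥X ∩ X^⊥`. -/
theorem min_triangle_hom_properties [IsTriangulated C] [HasBinaryBiproducts C] (ν : C ⥤ C) [ν.IsEquivalence] [ν.CommShift ℤ] [ν.IsTriangulated]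
    (e : ∀ X Y : C, (X ⟶ Y) ≃ₗ[k] Module.Dual k (Y ⟶ ν.obj X))
    (he : SerreDuality k ν e) (hfin : ∀ X Y : C, Module.Finite k (X ⟶ Y)) [IsIdempotentComplete C]
    (S X : Set C) (hS : SimpleMindedSystem S) (hX : X ⊆ S)
    (hstab : NuShiftStable ν X)
    (A M B : C) (f : A ⟶ M) (g : M ⟶ B) (h : B ⟶ A⟦(1:ℤ)⟧)
    (hmin : MinTriangle (leftOrth X) (filtClosure X) f g h)
    (X₁ : C) (hX₁ : X₁ ∈ X) :
    Function.Bijective (fun u : B ⟶ X₁ => g ≫ u) ∧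
    Function.Injective (fun u : X₁ ⟶ A => u ≫ f) ∧
    (M ∈ rightOrth X → A ∈ leftOrth X ∩ rightOrth X) := by
  obtain ⟨hT, hAmem, hBmem, happ, hminf⟩ := hmin
  have key : ∀ (Y : C), Y ∈ X → ∀ c : Y ⟶ A, c ≫ f = 0 → c = 0 :=
    fun Y hY c hcf => key_lemma_min_approx k ν e he S X hS hX hstab A M f
      hAmem happ hminf Y hY c hcf
  -- (a) injectivity auxiliary
  have ainj : ∀ u : B ⟶ X₁, g ≫ u = 0 → u = 0 := by
    intro u hu
    obtain ⟨w, hw⟩ := Pretriangulated.Triangle.yoneda_exact₃ _ hT u hu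
    obtain ⟨Y, hY, ⟨ι⟩⟩ := hstab.2 X₁ hX₁
    have hhw : h ≫ (w ≫ ι.inv) = 0 := by
      rw [← Module.forall_dual_apply_eq_zero_iff k (h ≫ (w ≫ ι.inv))]
      intro φ
      have hφ : e (Y⟦(1:ℤ)⟧) B ((e (Y⟦(1:ℤ)⟧) B).symm φ) = φ :=
        (e (Y⟦(1:ℤ)⟧) B).apply_symm_apply φ
      set s := (e (Y⟦(1:ℤ)⟧) B).symm φ with hsdef
      have hsh : s ≫ h = 0 := by
        obtain ⟨c₀, hc₀⟩ := (shiftFunctor C (1:ℤ)).map_surjective (s ≫ h)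
        have hhf : h ≫ (shiftFunctor C (1:ℤ)).map f = 0 :=
          Pretriangulated.comp_distTriang_mor_zero₃₁ _ hT
        have hc₀f : c₀ ≫ f = 0 := by
          apply (shiftFunctor C (1:ℤ)).map_injective
          rw [Functor.map_comp, hc₀, Functor.map_zero, Category.assoc, hhf,
            comp_zero]
        have : c₀ = 0 := key Y hY c₀ hc₀f
        rw [← hc₀, this, Functor.map_zero]
      calc φ (h ≫ (w ≫ ι.inv)) = e (Y⟦(1:ℤ)⟧) B s (h ≫ (w ≫ ι.inv)) := by
            rw [hφ]
        _ = e (Y⟦(1:ℤ)⟧) (A⟦(1:ℤ)⟧) (s ≫ h) (w ≫ ι.inv) :=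
            (he.2 (Y⟦(1:ℤ)⟧) B (A⟦(1:ℤ)⟧) s h (w ≫ ι.inv)).symm
        _ = e (Y⟦(1:ℤ)⟧) (A⟦(1:ℤ)⟧) 0 (w ≫ ι.inv) := by rw [hsh]
        _ = 0 := by rw [map_zero]; rfl
    have : u = (h ≫ (w ≫ ι.inv)) ≫ ι.hom := by
      rw [hw]; exact congrArg (fun x => h ≫ x) (show w = (w ≫ ι.inv) ≫ ι.hom by simp) |>.trans (Category.assoc _ _ _).symm
    rw [this, hhw, zero_comp]
  refine ⟨⟨?_, ?_⟩, ?_, ?_⟩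
  · -- (a) injectivity
    intro u₁ u₂ hequ
    have : g ≫ (u₁ - u₂) = 0 := by
      simp only at hequ
      rw [Preadditive.comp_sub, hequ, sub_self]
    have := ainj (u₁ - u₂) this
    rwa [sub_eq_zero] at this
  · -- (a) surjectivity
    intro w
    have hfw : f ≫ w = 0 := hAmem X₁ hX₁ (f ≫ w)
    obtain ⟨v, hv⟩ := Pretriangulated.Triangle.yoneda_exact₂ _ hT w hfw
    exact ⟨v, hv.symm⟩
  · -- (b)
    intro u₁ u₂ hequ
    have h0 : (u₁ - u₂) ≫ f = 0 := by
      simp only at hequ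
      rw [Preadditive.sub_comp, hequ, sub_self]
    have := key X₁ hX₁ (u₁ - u₂) h0
    rwa [sub_eq_zero] at this
  · -- (c)
    intro hM
    refine ⟨hAmem, ?_⟩
    intro X' hX' u
    exact key X' hX' u (hM X' hX' (u ≫ f))
end

section
/- Let T have Serre functor ν, S a simple-minded system, X ⊆ S with ν(X[1]) = X. Then μ⁻_X(μ⁺_X(S)) = S = μ⁺_X(μ⁻_X(S)); that is, left and right mutation at X are mutually inverse operations on simple-minded systems. -/
open CategoryTheory Limits Pretriangulated

universe v u

variable {C : Type u} [Category.{v} C] [Preadditive C] [HasZeroObject C]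
  [HasShift C ℤ] [∀ n : ℤ, (shiftFunctor C n).Additive] [Pretriangulated C]

variable (k : Type*) [Field k] [Linear k C]

section Aux

lemma subsingleton_of_subsingleton_dual {k V : Type*} [Field k] [AddCommGroup V] [Module k V]
    [Module.Finite k V] (h : Subsingleton (Module.Dual k V)) : Subsingleton V := by
  have : Subsingleton (Module.Dual k (Module.Dual k V)) :=
    ⟨fun f g => LinearMap.ext fun x => by rw [Subsingleton.elim x 0, map_zero, map_zero]⟩
  exact (Module.evalEquiv k V).toEquiv.subsingleton

lemma mem_extStar_of_iso {S₁ S₂ : Set C} {T : Triangle C} (hT : T ∈ distTriang C)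
    {A' B' : C} (eA : T.obj₁ ≅ A') (eB : T.obj₃ ≅ B') (hA : A' ∈ S₁) (hB : B' ∈ S₂) :
    T.obj₂ ∈ extStar S₁ S₂ := by
  refine ⟨A', B', eA.inv ≫ T.mor₁, T.mor₂ ≫ eB.hom, eB.inv ≫ T.mor₃ ≫ eA.hom⟦(1:ℤ)⟧', ?_, hA, hB⟩
  refine isomorphic_distinguished _ hT _ ?_
  refine Triangle.isoMk _ _ eA.symm (Iso.refl _) eB.symm (by simp [Triangle.mk]) (by simp [Triangle.mk]) ?_
  simp [Triangle.mk, ← Functor.map_comp]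

lemma mem_filt_of_iso {S : Set C} {n : ℕ} {M N : C} (e : M ≅ N) (h : M ∈ filt S n) :
    N ∈ filt S n := by
  induction n with
  | zero => exact h.of_iso e.symm
  | succ n _ =>
    obtain ⟨A, B, f, g, hh, hdist, hA, hB⟩ := h
    exact ⟨A, B, f ≫ e.hom, e.inv ≫ g, hh,
      isomorphic_distinguished _ hdist _
        (Triangle.isoMk _ _ (Iso.refl _) e.symm (Iso.refl _) (by simp [Triangle.mk]) (by simp [Triangle.mk]) (by simp [Triangle.mk])),
      hA, hB⟩

lemma mem_filtClosure_of_iso {S : Set C} {M N : C} (e : M ≅ N) (h : M ∈ filtClosure S) :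
    N ∈ filtClosure S := by
  obtain ⟨n, hn⟩ := h
  exact ⟨n, mem_filt_of_iso e hn⟩

lemma hom_filt_zero_right {S : Set C} {Y : C} (hY : ∀ x ∈ S, ∀ f : x ⟶ Y, f = 0) :
    ∀ n : ℕ, ∀ M ∈ filt S n, ∀ φ : M ⟶ Y, φ = 0 := by
  intro n
  induction n with
  | zero => exact fun M hM φ => hM.eq_of_src φ 0
  | succ n ih =>
    rintro M ⟨A, B, f, g, hh, hdist, hA, hB⟩ φ
    obtain ⟨ψ, hψ⟩ := Triangle.yoneda_exact₂ _ hdist φ (ih A hA (f ≫ φ))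
    have hψ0 : ψ = 0 := by
      rcases hB with hB | hB
      · exact hY B hB ψ
      · exact hB.eq_of_src ψ 0
    rw [hψ, hψ0, comp_zero]; rfl

lemma hom_filtClosure_zero_right {S : Set C} {Y : C} (hY : ∀ x ∈ S, ∀ f : x ⟶ Y, f = 0)
    {M : C} (hM : M ∈ filtClosure S) (φ : M ⟶ Y) : φ = 0 := by
  obtain ⟨n, hn⟩ := hM
  exact hom_filt_zero_right hY n M hn φ

lemma hom_filt_zero_left {S : Set C} {W : C} (hW : ∀ x ∈ S, ∀ f : W ⟶ x, f = 0) :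
    ∀ n : ℕ, ∀ M ∈ filt S n, ∀ φ : W ⟶ M, φ = 0 := by
  intro n
  induction n with
  | zero => exact fun M hM φ => hM.eq_of_tgt φ 0
  | succ n ih =>
    rintro M ⟨A, B, f, g, hh, hdist, hA, hB⟩ φ
    have hg : φ ≫ g = 0 := by
      rcases hB with hB | hB
      · exact hW B hB (φ ≫ g)
      · exact hB.eq_of_tgt _ 0
    obtain ⟨ψ, hψ⟩ := Triangle.coyoneda_exact₂ _ hdist φ hg
    rw [hψ, show ψ = 0 from ih A hA ψ]; exact zero_comp

lemma hom_filtClosure_zero_left {S : Set C} {W : C} (hW : ∀ x ∈ S, ∀ f : W ⟶ x, f = 0)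
    {M : C} (hM : M ∈ filtClosure S) (φ : W ⟶ M) : φ = 0 := by
  obtain ⟨n, hn⟩ := hM
  exact hom_filt_zero_left hW n M hn φ

end Aux

section Nu

variable (ν : C ⥤ C) [ν.IsEquivalence] [ν.CommShift ℤ] [ν.IsTriangulated]

lemma nu_filt (X : Set C) (hst : ∀ x ∈ X, ∃ Z ∈ X, Nonempty (ν.obj (x⟦(1:ℤ)⟧) ≅ Z)) :
    ∀ n : ℕ, ∀ M ∈ filt X n, ν.obj (M⟦(1:ℤ)⟧) ∈ filt X n := by
  intro n
  induction n with
  | zero =>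
    intro M hM
    exact ν.map_isZero ((shiftFunctor C (1:ℤ)).map_isZero hM)
  | succ n ih =>
    rintro M ⟨A, B, f, g, hh, hdist, hA, hB⟩
    have hT₁ : ν.mapTriangle.obj (((Triangle.mk f g hh).rotate).rotate.rotate) ∈ distTriang C :=
      ν.map_distinguished _ (rot_of_distTriang _ (rot_of_distTriang _ (rot_of_distTriang _ hdist)))
    rcases hB with hBX | hB0
    · obtain ⟨Z, hZ, ⟨eB⟩⟩ := hst B hBX
      exact mem_extStar_of_iso hT₁ (Iso.refl _) eB (ih A hA) (Or.inl hZ)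
    · exact mem_extStar_of_iso hT₁ (Iso.refl _) (Iso.refl _) (ih A hA)
        (Or.inr (ν.map_isZero ((shiftFunctor C (1:ℤ)).map_isZero hB0)))

lemma nu_filtClosure (X : Set C) (hst : ∀ x ∈ X, ∃ Z ∈ X, Nonempty (ν.obj (x⟦(1:ℤ)⟧) ≅ Z))
    {M : C} (hM : M ∈ filtClosure X) : ν.obj (M⟦(1:ℤ)⟧) ∈ filtClosure X := by
  obtain ⟨n, hn⟩ := hM
  exact ⟨n, nu_filt ν X hst n M hn⟩

end Nu

set_option linter.unusedSectionVars false

section NuOnto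

variable (ν : C ⥤ C) [ν.IsEquivalence] [ν.CommShift ℤ] [ν.IsTriangulated]

lemma nu_filt_onto (X : Set C) (hst : ∀ z ∈ X, ∃ x ∈ X, Nonempty (ν.obj (x⟦(1:ℤ)⟧) ≅ z)) :
    ∀ n : ℕ, ∀ M ∈ filt X n, ∃ M' ∈ filt X n, Nonempty (ν.obj (M'⟦(1:ℤ)⟧) ≅ M) := by
  intro n
  induction n with
  | zero =>
    intro M hM
    exact ⟨M, hM, ⟨(ν.map_isZero ((shiftFunctor C (1:ℤ)).map_isZero hM)).iso hM⟩⟩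
  | succ n ih =>
    rintro M ⟨A, B, f, g, hh, hdist, hA, hB⟩
    obtain ⟨A', hA', ⟨ηA⟩⟩ := ih A hA
    obtain ⟨B', hB', ⟨ηB⟩⟩ : ∃ B' ∈ X ∪ {W : C | IsZero W}, Nonempty (ν.obj (B'⟦(1:ℤ)⟧) ≅ B) := by
      rcases hB with hBX | hB0
      · obtain ⟨x, hx, ⟨ηB⟩⟩ := hst B hBX
        exact ⟨x, Or.inl hx, ⟨ηB⟩⟩
      · exact ⟨B, Or.inr hB0,
          ⟨(ν.map_isZero ((shiftFunctor C (1:ℤ)).map_isZero hB0)).iso hB0⟩⟩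
    set c : ν.obj (B'⟦(1:ℤ)⟧) ⟶ ν.obj ((A'⟦(1:ℤ)⟧)⟦(1:ℤ)⟧) :=
      -(ηB.hom ≫ hh ≫ ηA.inv⟦(1:ℤ)⟧' ≫ (ν.commShiftIso (1:ℤ)).inv.app (A'⟦(1:ℤ)⟧)) with hc
    have hb' : ν.map (((shiftFunctor C (1:ℤ)).preimage (ν.preimage c))⟦(1:ℤ)⟧') = c := by
      rw [Functor.map_preimage, Functor.map_preimage]
    set b' : B' ⟶ A'⟦(1:ℤ)⟧ := (shiftFunctor C (1:ℤ)).preimage (ν.preimage c) with hbdef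
    obtain ⟨M', f', g', hT'⟩ := distinguished_cocone_triangle₂ b'
    refine ⟨M', ⟨A', B', f', g', b', hT', hA', hB'⟩, ?_⟩
    have hT₁ : ν.mapTriangle.obj (((Triangle.mk f' g' b').rotate).rotate.rotate) ∈ distTriang C :=
      ν.map_distinguished _ (rot_of_distTriang _ (rot_of_distTriang _ (rot_of_distTriang _ hT')))
    have comm : (ν.mapTriangle.obj (((Triangle.mk f' g' b').rotate).rotate.rotate)).mor₃ ≫
        ηA.hom⟦(1:ℤ)⟧' = ηB.hom ≫ (Triangle.mk f g hh).mor₃ := by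
      change (ν.map (-(b'⟦(1:ℤ)⟧')) ≫ (ν.commShiftIso (1:ℤ)).hom.app (A'⟦(1:ℤ)⟧)) ≫
        ηA.hom⟦(1:ℤ)⟧' = ηB.hom ≫ hh
      rw [Functor.map_neg, hb', hc]
      simp
    obtain ⟨bmid, hb1, hb2⟩ := complete_distinguished_triangle_morphism₂ _ _ hT₁ hdist
      ηA.hom ηB.hom comm
    have : IsIso bmid := by
      refine isIso₂_of_isIso₁₃
        ({ hom₁ := ηA.hom, hom₂ := bmid, hom₃ := ηB.hom,
           comm₁ := hb1, comm₂ := hb2, comm₃ := comm } :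
          ν.mapTriangle.obj (((Triangle.mk f' g' b').rotate).rotate.rotate) ⟶ Triangle.mk f g hh)
        hT₁ hdist (Iso.isIso_hom ηA) (Iso.isIso_hom ηB)
    exact ⟨@asIso _ _ _ _ bmid this⟩

lemma nu_filtClosure_onto (X : Set C)
    (hst : ∀ z ∈ X, ∃ x ∈ X, Nonempty (ν.obj (x⟦(1:ℤ)⟧) ≅ z))
    {M : C} (hM : M ∈ filtClosure X) :
    ∃ M' ∈ filtClosure X, Nonempty (ν.obj M' ≅ M⟦(-1:ℤ)⟧) := by
  obtain ⟨n, hn⟩ := hM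
  obtain ⟨M', h1, ⟨w⟩⟩ := nu_filt_onto ν X hst n M hn
  refine ⟨M', ⟨n, h1⟩, ⟨?_⟩⟩
  have i2 : (ν.obj M')⟦(1:ℤ)⟧ ≅ M := ((ν.commShiftIso (1:ℤ)).app M').symm ≪≫ w
  exact ((shiftFunctorCompIsoId C (1:ℤ) (-1:ℤ) (by norm_num)).app (ν.obj M')).symm ≪≫
    (shiftFunctor C (-1:ℤ)).mapIso i2

section Crux

variable (ν : C ⥤ C) [ν.IsEquivalence] [ν.CommShift ℤ] [ν.IsTriangulated]

/-- Key lemma: if `W = α Y` is given by a minimal right `⊥X`-approximation triangle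
`W → Y[-1] → B₀ → W[1]` and `V = β' W` by a minimal triangle `A₁ → W[1] → V → A₁[1]`,
then `V ≅ Y`. -/
lemma crux_beta_alpha {k : Type*} [Field k] [Linear k C]
    (e : ∀ X Y : C, (X ⟶ Y) ≃ₗ[k] Module.Dual k (Y ⟶ ν.obj X))
    (S X : Set C) (hS : SimpleMindedSystem S) (hX : X ⊆ S)
    (hst : ∀ x ∈ X, ∃ Z ∈ X, Nonempty (ν.obj (x⟦(1:ℤ)⟧) ≅ Z))
    {Y : C} (hYS : Y ∈ S) (hYX : Y ∉ X)
    {W B₀ : C} {f₀ : W ⟶ Y⟦(-1:ℤ)⟧} {g₀ : Y⟦(-1:ℤ)⟧ ⟶ B₀} {h₀ : B₀ ⟶ W⟦(1:ℤ)⟧}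
    (hmt₀ : MinTriangle (leftOrth X) (filtClosure X) f₀ g₀ h₀)
    {A₁ V : C} {f₁ : A₁ ⟶ W⟦(1:ℤ)⟧} {g₁ : W⟦(1:ℤ)⟧ ⟶ V} {h₁ : V ⟶ A₁⟦(1:ℤ)⟧}
    (hmt₁ : MinTriangle (filtClosure X) (rightOrth X) f₁ g₁ h₁) :
    Nonempty (V ≅ Y) := by
  obtain ⟨hT₀, hWl, hB₀, hap₀, hmin₀⟩ := hmt₀
  obtain ⟨hT₁, hA₁, hVr, hap₁, hmin₁⟩ := hmt₁
  have hYr : ∀ x ∈ X, ∀ φ : x ⟶ Y, φ = 0 :=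
    fun x hx φ => hS.1.2 x (hX hx) Y hYS (fun h => hYX (h ▸ hx)) φ
  have hYl : ∀ x ∈ X, ∀ φ : Y ⟶ x, φ = 0 :=
    fun x hx φ => hS.1.2 Y hYS x (hX hx) (fun h => hYX (h.symm ▸ hx)) φ
  have L1 : ∀ M ∈ filtClosure X, ∀ φ : M ⟶ Y, φ = 0 :=
    fun M hM φ => hom_filtClosure_zero_right hYr hM φ
  -- the second triangle on `W⟦1⟧` with cocone `Y`
  set ι : (Y⟦(-1:ℤ)⟧)⟦(1:ℤ)⟧ ≅ Y := (shiftFunctorCompIsoId C (-1:ℤ) (1:ℤ) (by norm_num)).app Y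
    with hι
  have hT₂ : Triangle.mk h₀ ((-(f₀⟦(1:ℤ)⟧')) ≫ ι.hom) (ι.inv ≫ (-(g₀⟦(1:ℤ)⟧'))) ∈
      distTriang C := by
    refine isomorphic_distinguished _ (rot_of_distTriang _ (rot_of_distTriang _ hT₀)) _ ?_
    exact Triangle.isoMk _ _ (Iso.refl _) (Iso.refl _) ι.symm (by simp [Triangle.mk, Triangle.rotate]) (by simp [Triangle.mk, Triangle.rotate]) (by simp [Triangle.mk, Triangle.rotate])
  have happrox₂ : ∀ A' ∈ filtClosure X, ∀ u : A' ⟶ W⟦(1:ℤ)⟧, ∃ w, w ≫ h₀ = u := by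
    intro A' hA' u
    obtain ⟨w, hw⟩ := Triangle.coyoneda_exact₂ _ hT₂ u (L1 A' hA' _)
    exact ⟨w, hw.symm⟩
  obtain ⟨v, hv⟩ := happrox₂ A₁ hA₁ f₁
  obtain ⟨w, hw⟩ := hap₁ B₀ hB₀ h₀
  have hp : IsIso (v ≫ w) := hmin₁ _ (by rw [Category.assoc, hw, hv])
  obtain ⟨φ, hφ₁, hφ₂⟩ := complete_distinguished_triangle_morphism
    (Triangle.mk f₁ g₁ h₁) _ hT₁ hT₂ v (𝟙 _) (by dsimp [Triangle.mk]; rw [Category.comp_id, hv])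
  obtain ⟨ψ, hψ₁, hψ₂⟩ := complete_distinguished_triangle_morphism
    _ (Triangle.mk f₁ g₁ h₁) hT₂ hT₁ w (𝟙 _) (by dsimp [Triangle.mk]; rw [Category.comp_id, hw])
  change V ⟶ Y at φ
  change Y ⟶ V at ψ
  dsimp [Triangle.mk] at hφ₁ hφ₂ hψ₁ hψ₂
  rw [Category.id_comp] at hφ₁ hψ₁
  have hq : IsIso (φ ≫ ψ) := by
    refine isIso₃_of_isIso₁₂
      ({ hom₁ := v ≫ w, hom₂ := 𝟙 _, hom₃ := φ ≫ ψ,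
         comm₁ := by dsimp [Triangle.mk]; rw [Category.comp_id, Category.assoc, hw, hv],
         comm₂ := by dsimp [Triangle.mk]; rw [Category.id_comp, ← Category.assoc, hφ₁, hψ₁],
         comm₃ := by
           dsimp [Triangle.mk]
           rw [Functor.map_comp, ← Category.assoc, hφ₂, Category.assoc, hψ₂, ← Category.assoc] } :
        Triangle.mk f₁ g₁ h₁ ⟶ Triangle.mk f₁ g₁ h₁) hT₁ hT₁ hp ?_
    dsimp
    infer_instance
  by_cases hε : ψ ≫ inv (φ ≫ ψ) ≫ φ = 0
  · exfalso
    have key : (φ ≫ ψ) ≫ inv (φ ≫ ψ) = 𝟙 _ := IsIso.hom_inv_id _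
    have h5 : φ ≫ (ψ ≫ inv (φ ≫ ψ) ≫ φ) ≫ ψ = φ ≫ ψ := by
      calc φ ≫ (ψ ≫ inv (φ ≫ ψ) ≫ φ) ≫ ψ
          = ((φ ≫ ψ) ≫ inv (φ ≫ ψ)) ≫ (φ ≫ ψ) := by simp only [Category.assoc]
        _ = φ ≫ ψ := by rw [key, Category.id_comp]
    rw [hε, zero_comp, comp_zero] at h5
    have hiso0 : IsIso (0 : V ⟶ V) := by rw [h5]; exact hq
    have hVzero : IsZero V := by
      rw [IsZero.iff_id_eq_zero, ← IsIso.hom_inv_id (0 : V ⟶ V), zero_comp]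
    have hf₁iso : IsIso f₁ := (Triangle.isZero₃_iff_isIso₁ _ hT₁).1 hVzero
    have hW1 : W⟦(1:ℤ)⟧ ∈ filtClosure X := mem_filtClosure_of_iso (asIso f₁) hA₁
    have hf₀ : f₀ = 0 := by
      have h6 : f₀⟦(1:ℤ)⟧' ≫ ι.hom = 0 := L1 _ hW1 _
      have h7 : f₀⟦(1:ℤ)⟧' = 0 := by
        rw [← Category.comp_id (f₀⟦(1:ℤ)⟧'), ← ι.hom_inv_id, ← Category.assoc, h6, zero_comp]
      exact ((shiftFunctor C (1:ℤ)).map_eq_zero_iff).1 h7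
    have hWzero : IsZero W := by
      have h8 : IsIso (0 : W ⟶ W) := hmin₀ 0 (by rw [zero_comp, hf₀])
      rw [IsZero.iff_id_eq_zero, ← IsIso.hom_inv_id (0 : W ⟶ W), zero_comp]
    have hg₀iso : IsIso g₀ :=
      (Triangle.isZero₃_iff_isIso₁ _ (rot_of_distTriang _ hT₀)).1
        ((shiftFunctor C (1:ℤ)).map_isZero hWzero)
    haveI := hg₀iso
    have hYm : (Y⟦(-1:ℤ)⟧) ∈ filtClosure X := mem_filtClosure_of_iso (asIso g₀).symm hB₀
    have hνY : ν.obj ((Y⟦(-1:ℤ)⟧)⟦(1:ℤ)⟧) ∈ filtClosure X := nu_filtClosure ν X hst hYm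
    have hzero : ∀ φ' : Y ⟶ ν.obj Y, φ' = 0 := by
      intro φ'
      have h8 : φ' ≫ ν.map ι.inv = 0 := hom_filtClosure_zero_left hYl hνY _
      calc φ' = φ' ≫ ν.map ι.inv ≫ ν.map ι.hom := by
            rw [← Functor.map_comp, Iso.inv_hom_id]; simp
        _ = 0 := by rw [← Category.assoc, h8, zero_comp]
    have hid0 : 𝟙 Y = 0 := by
      apply (e Y Y).injective
      apply LinearMap.ext
      intro x
      rw [hzero x]
      simp
    exact (hS.1.1 Y hYS).1 ((IsZero.iff_id_eq_zero Y).2 hid0)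
  · have hiso : IsIso (ψ ≫ inv (φ ≫ ψ) ≫ φ) := (hS.1.1 Y hYS).2 _ hε
    have hid : ψ ≫ inv (φ ≫ ψ) ≫ φ = 𝟙 Y := by
      have key : (φ ≫ ψ) ≫ inv (φ ≫ ψ) = 𝟙 _ := IsIso.hom_inv_id _
      have h2 : (ψ ≫ inv (φ ≫ ψ) ≫ φ) ≫ (ψ ≫ inv (φ ≫ ψ) ≫ φ)
          = (ψ ≫ inv (φ ≫ ψ) ≫ φ) ≫ 𝟙 Y := by
        calc (ψ ≫ inv (φ ≫ ψ) ≫ φ) ≫ (ψ ≫ inv (φ ≫ ψ) ≫ φ)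
            = ψ ≫ inv (φ ≫ ψ) ≫ ((φ ≫ ψ) ≫ inv (φ ≫ ψ)) ≫ φ := by
              simp only [Category.assoc]
          _ = ψ ≫ inv (φ ≫ ψ) ≫ φ := by rw [key, Category.id_comp]
          _ = (ψ ≫ inv (φ ≫ ψ) ≫ φ) ≫ 𝟙 Y := by rw [Category.comp_id]
      haveI := hiso
      exact (cancel_epi (ψ ≫ inv (φ ≫ ψ) ≫ φ)).1 h2
    refine ⟨⟨inv (φ ≫ ψ) ≫ φ, ψ, ?_, ?_⟩⟩
    · rw [Category.assoc, IsIso.inv_hom_id]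
    · rw [← Category.assoc] at hid ⊢
      exact hid

end Crux

/-- Key lemma, dual direction: if `W = β Y` is given by a minimal triangle
`A₀ → Y[1] → W → A₀[1]` and `V = α' W` by a minimal triangle `V → W[-1] → B₁ → V[1]`,
then `V ≅ Y`. -/
lemma crux_alpha_beta {k : Type*} [Field k] [Linear k C]
    (e : ∀ X Y : C, (X ⟶ Y) ≃ₗ[k] Module.Dual k (Y ⟶ ν.obj X))
    (hfin : ∀ X Y : C, Module.Finite k (X ⟶ Y))
    (S X : Set C) (hS : SimpleMindedSystem S) (hX : X ⊆ S)
    (hst2 : ∀ z ∈ X, ∃ x ∈ X, Nonempty (ν.obj (x⟦(1:ℤ)⟧) ≅ z))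
    {Y : C} (hYS : Y ∈ S) (hYX : Y ∉ X)
    {A₀ W : C} {f₀ : A₀ ⟶ Y⟦(1:ℤ)⟧} {g₀ : Y⟦(1:ℤ)⟧ ⟶ W} {h₀ : W ⟶ A₀⟦(1:ℤ)⟧}
    (hmt₀ : MinTriangle (filtClosure X) (rightOrth X) f₀ g₀ h₀)
    {V B₁ : C} {f₁ : V ⟶ W⟦(-1:ℤ)⟧} {g₁ : W⟦(-1:ℤ)⟧ ⟶ B₁} {h₁ : B₁ ⟶ V⟦(1:ℤ)⟧}
    (hmt₁ : MinTriangle (leftOrth X) (filtClosure X) f₁ g₁ h₁) :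
    Nonempty (V ≅ Y) := by
  obtain ⟨hT₀, hA₀, hWr, hap₀, hmin₀⟩ := hmt₀
  obtain ⟨hT₁, hVl, hB₁, hap₁, hmin₁⟩ := hmt₁
  have hYr : ∀ x ∈ X, ∀ φ : x ⟶ Y, φ = 0 :=
    fun x hx φ => hS.1.2 x (hX hx) Y hYS (fun h => hYX (h ▸ hx)) φ
  have hYl : ∀ x ∈ X, ∀ φ : Y ⟶ x, φ = 0 :=
    fun x hx φ => hS.1.2 Y hYS x (hX hx) (fun h => hYX (h.symm ▸ hx)) φ
  have L2 : ∀ M ∈ filtClosure X, ∀ φ : Y ⟶ M, φ = 0 :=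
    fun M hM φ => hom_filtClosure_zero_left hYl hM φ
  set κ : Y ≅ (Y⟦(1:ℤ)⟧)⟦(-1:ℤ)⟧ :=
    ((shiftFunctorCompIsoId C (1:ℤ) (-1:ℤ) (by norm_num)).app Y).symm with hκ
  have hT₂ : Triangle.mk (κ.hom ≫ ((Triangle.mk f₀ g₀ h₀).invRotate.invRotate).mor₁)
      ((Triangle.mk f₀ g₀ h₀).invRotate.invRotate).mor₂
      (((Triangle.mk f₀ g₀ h₀).invRotate.invRotate).mor₃ ≫ κ.inv⟦(1:ℤ)⟧') ∈ distTriang C := by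
    refine isomorphic_distinguished _
      (inv_rot_of_distTriang _ (inv_rot_of_distTriang _ hT₀)) _ ?_
    exact Triangle.isoMk _ _ κ (Iso.refl _) (Iso.refl _) (by simp [Triangle.mk, Triangle.invRotate]) (by simp [Triangle.mk, Triangle.invRotate]) (by simp [Triangle.mk, Triangle.invRotate])
  have happrox₂ : ∀ W' ∈ leftOrth X, ∀ u : W' ⟶ W⟦(-1:ℤ)⟧,
      ∃ t : W' ⟶ Y, t ≫ (κ.hom ≫ ((Triangle.mk f₀ g₀ h₀).invRotate.invRotate).mor₁) = u := by
    intro W' hW' u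
    have hu : u ≫ ((Triangle.mk f₀ g₀ h₀).invRotate.invRotate).mor₂ = 0 := by
      refine hom_filtClosure_zero_left ?_ hA₀ _
      exact fun x hx φ => hW' x hx φ
    obtain ⟨t, ht⟩ := Triangle.coyoneda_exact₂ _ hT₂ u hu
    exact ⟨t, ht.symm⟩
  obtain ⟨v, hv⟩ := happrox₂ V hVl f₁
  have hYlmem : Y ∈ leftOrth X := fun x hx φ => hYl x hx φ
  obtain ⟨w, hw⟩ := hap₁ Y hYlmem (κ.hom ≫ ((Triangle.mk f₀ g₀ h₀).invRotate.invRotate).mor₁)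
  have hq : IsIso (v ≫ w) := hmin₁ _ (by rw [Category.assoc, hw]; exact hv)
  by_cases hε : w ≫ inv (v ≫ w) ≫ v = 0
  · exfalso
    have key : (v ≫ w) ≫ inv (v ≫ w) = 𝟙 _ := IsIso.hom_inv_id _
    have h5 : v ≫ (w ≫ inv (v ≫ w) ≫ v) ≫ w = v ≫ w := by
      calc v ≫ (w ≫ inv (v ≫ w) ≫ v) ≫ w
          = ((v ≫ w) ≫ inv (v ≫ w)) ≫ (v ≫ w) := by simp only [Category.assoc]
        _ = v ≫ w := by rw [key, Category.id_comp]
    rw [hε, zero_comp, comp_zero] at h5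
    have hiso0 : IsIso (0 : V ⟶ V) := by rw [h5]; exact hq
    have hVzero : IsZero V := by
      rw [IsZero.iff_id_eq_zero, ← IsIso.hom_inv_id (0 : V ⟶ V), zero_comp]
    have hg₁iso : IsIso g₁ := (Triangle.isZero₁_iff_isIso₂ _ hT₁).1 hVzero
    have hWm : W⟦(-1:ℤ)⟧ ∈ filtClosure X := mem_filtClosure_of_iso (asIso g₁).symm hB₁
    have hm₁0 : (κ.hom ≫ ((Triangle.mk f₀ g₀ h₀).invRotate.invRotate).mor₁) = 0 :=
      L2 _ hWm _
    have hepi : Epi (((Triangle.mk f₀ g₀ h₀).invRotate.invRotate).mor₃ ≫ κ.inv⟦(1:ℤ)⟧') :=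
      Triangle.epi₃ _ hT₂ hm₁0
    -- rewrite `mor₃` as `f₀` composed with an isomorphism
    have hm3 : (((Triangle.mk f₀ g₀ h₀).invRotate.invRotate).mor₃ ≫ κ.inv⟦(1:ℤ)⟧')
        = f₀ ≫ ((shiftEquiv C (1:ℤ)).counitIso.inv.app (Y⟦(1:ℤ)⟧) ≫ κ.inv⟦(1:ℤ)⟧') := by
      dsimp [Triangle.invRotate]
      exact Category.assoc _ _ _
    rw [hm3] at hepi
    have hepi₀ : Epi f₀ := by
      haveI : IsIso ((shiftEquiv C (1:ℤ)).counitIso.inv.app (Y⟦(1:ℤ)⟧) ≫ κ.inv⟦(1:ℤ)⟧') :=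
        IsIso.comp_isIso' (Iso.isIso_inv ((shiftEquiv C (1:ℤ)).counitIso.app _)) (Iso.isIso_inv ((shiftFunctor C (1:ℤ)).mapIso κ))
      have : f₀ = (f₀ ≫ ((shiftEquiv C (1:ℤ)).counitIso.inv.app (Y⟦(1:ℤ)⟧) ≫ κ.inv⟦(1:ℤ)⟧'))
          ≫ inv ((shiftEquiv C (1:ℤ)).counitIso.inv.app (Y⟦(1:ℤ)⟧) ≫ κ.inv⟦(1:ℤ)⟧') := by
        rw [Category.assoc, IsIso.hom_inv_id, Category.comp_id]
      rw [this]
      exact @epi_comp _ _ _ _ _ _ hepi _ (IsIso.epi_of_iso _)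
    haveI := hepi₀
    haveI : IsSplitEpi f₀ := isSplitEpi_of_epi f₀
    have hs : section_ f₀ ≫ f₀ = 𝟙 (Y⟦(1:ℤ)⟧) := IsSplitEpi.id f₀
    have hu : IsIso (f₀ ≫ section_ f₀) := hmin₀ _ (by rw [Category.assoc, hs, Category.comp_id])
    have hf₀iso : IsIso f₀ := by
      refine ⟨section_ f₀ ≫ inv (f₀ ≫ section_ f₀), ?_, ?_⟩
      · rw [← Category.assoc, IsIso.hom_inv_id]
      · have h9 : inv (f₀ ≫ section_ f₀) ≫ f₀ = f₀ := by
          rw [IsIso.inv_comp_eq, Category.assoc, hs, Category.comp_id]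
        rw [Category.assoc, h9, hs]
    have hY1 : Y⟦(1:ℤ)⟧ ∈ filtClosure X := mem_filtClosure_of_iso (asIso f₀) hA₀
    obtain ⟨M', hM', ⟨w0⟩⟩ := nu_filtClosure_onto ν X hst2 hY1
    have wiso : ν.obj M' ≅ Y := w0 ≪≫ κ.symm
    have hsub1 : Subsingleton (M' ⟶ Y) :=
      ⟨fun a b => by rw [hom_filtClosure_zero_right hYr hM' a,
        hom_filtClosure_zero_right hYr hM' b]⟩
    have hsub2 : Subsingleton (Module.Dual k (Y ⟶ ν.obj M')) :=
      ((e M' Y).symm.toEquiv).subsingleton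
    haveI := hfin Y (ν.obj M')
    have hsub3 : Subsingleton (Y ⟶ ν.obj M') := subsingleton_of_subsingleton_dual hsub2
    have hid0 : 𝟙 Y = 0 := by
      calc 𝟙 Y = (𝟙 Y ≫ wiso.inv) ≫ wiso.hom := by simp
        _ = (0 : Y ⟶ ν.obj M') ≫ wiso.hom := by rw [Subsingleton.elim (𝟙 Y ≫ wiso.inv) 0]
        _ = 0 := zero_comp
    exact (hS.1.1 Y hYS).1 ((IsZero.iff_id_eq_zero Y).2 hid0)
  · have hiso : IsIso (w ≫ inv (v ≫ w) ≫ v) := (hS.1.1 Y hYS).2 _ hε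
    have hid : w ≫ inv (v ≫ w) ≫ v = 𝟙 Y := by
      have key : (v ≫ w) ≫ inv (v ≫ w) = 𝟙 _ := IsIso.hom_inv_id _
      have h2 : (w ≫ inv (v ≫ w) ≫ v) ≫ (w ≫ inv (v ≫ w) ≫ v)
          = (w ≫ inv (v ≫ w) ≫ v) ≫ 𝟙 Y := by
        calc (w ≫ inv (v ≫ w) ≫ v) ≫ (w ≫ inv (v ≫ w) ≫ v)
            = w ≫ inv (v ≫ w) ≫ ((v ≫ w) ≫ inv (v ≫ w)) ≫ v := by
              simp only [Category.assoc]
          _ = w ≫ inv (v ≫ w) ≫ v := by rw [key, Category.id_comp]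
          _ = (w ≫ inv (v ≫ w) ≫ v) ≫ 𝟙 Y := by rw [Category.comp_id]
      haveI := hiso
      exact (cancel_epi (w ≫ inv (v ≫ w) ≫ v)).1 h2
    refine ⟨⟨inv (v ≫ w) ≫ v, w, ?_, ?_⟩⟩
    · rw [Category.assoc, IsIso.inv_hom_id]
    · rw [← Category.assoc] at hid ⊢
      exact hid


/-- left and right mutation at `X` are mutually inverse:
`μ⁻_X(μ⁺_X(S)) = S = μ⁺_X(μ⁻_X(S))` (up to isomorphism of the chosen mutation
objects). -/
theorem mutation_inverse [IsTriangulated C] [HasBinaryBiproducts C] (ν : C ⥤ C) [ν.IsEquivalence] [ν.CommShift ℤ] [ν.IsTriangulated]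
    (e : ∀ X Y : C, (X ⟶ Y) ≃ₗ[k] Module.Dual k (Y ⟶ ν.obj X))
    (he : SerreDuality k ν e) (hfin : ∀ X Y : C, Module.Finite k (X ⟶ Y)) [IsIdempotentComplete C]
    (S X : Set C) (hS : SimpleMindedSystem S) (hX : X ⊆ S)
    (hstab : NuShiftStable ν X)
    (α : C → C)
    (hα : ∀ Y ∈ S \ X, ∃ (B : C) (f : α Y ⟶ Y⟦(-1:ℤ)⟧) (g : Y⟦(-1:ℤ)⟧ ⟶ B)
      (h : B ⟶ (α Y)⟦(1:ℤ)⟧), MinTriangle (leftOrth X) (filtClosure X) f g h)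
    (β : C → C)
    (hβ : ∀ Y ∈ S \ X, ∃ (A : C) (f : A ⟶ Y⟦(1:ℤ)⟧) (g : Y⟦(1:ℤ)⟧ ⟶ β Y)
      (h : β Y ⟶ A⟦(1:ℤ)⟧), MinTriangle (filtClosure X) (rightOrth X) f g h)
    (β' : C → C)
    (hβ' : ∀ Z ∈ (X ∪ α '' (S \ X)) \ X, ∃ (A : C) (f : A ⟶ Z⟦(1:ℤ)⟧)
      (g : Z⟦(1:ℤ)⟧ ⟶ β' Z) (h : β' Z ⟶ A⟦(1:ℤ)⟧),
      MinTriangle (filtClosure X) (rightOrth X) f g h)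
    (α' : C → C)
    (hα' : ∀ Z ∈ (X ∪ β '' (S \ X)) \ X, ∃ (B : C) (f : α' Z ⟶ Z⟦(-1:ℤ)⟧)
      (g : Z⟦(-1:ℤ)⟧ ⟶ B) (h : B ⟶ (α' Z)⟦(1:ℤ)⟧),
      MinTriangle (leftOrth X) (filtClosure X) f g h) :
    ((∀ W ∈ X ∪ β' '' ((X ∪ α '' (S \ X)) \ X), ∃ Y ∈ S, Nonempty (W ≅ Y)) ∧
      (∀ Y ∈ S, ∃ W ∈ X ∪ β' '' ((X ∪ α '' (S \ X)) \ X), Nonempty (W ≅ Y))) ∧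
    ((∀ W ∈ X ∪ α' '' ((X ∪ β '' (S \ X)) \ X), ∃ Y ∈ S, Nonempty (W ≅ Y)) ∧
      (∀ Y ∈ S, ∃ W ∈ X ∪ α' '' ((X ∪ β '' (S \ X)) \ X), Nonempty (W ≅ Y))) := by
  obtain ⟨hst1, hst2⟩ := hstab
  have hαmem : ∀ Y ∈ S \ X, α Y ∈ (X ∪ α '' (S \ X)) \ X := by
    rintro Y ⟨hYS, hYX⟩
    obtain ⟨B₀, f₀, g₀, h₀, hmt₀⟩ := hα Y ⟨hYS, hYX⟩
    exact ⟨Or.inr ⟨Y, ⟨hYS, hYX⟩, rfl⟩, fun hmem => (hS.1.1 (α Y) (hX hmem)).1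
      ((IsZero.iff_id_eq_zero _).2 (hmt₀.2.1 (α Y) hmem (𝟙 (α Y))))⟩
  have hβmem : ∀ Y ∈ S \ X, β Y ∈ (X ∪ β '' (S \ X)) \ X := by
    rintro Y ⟨hYS, hYX⟩
    obtain ⟨A₀, f₀, g₀, h₀, hmt₀⟩ := hβ Y ⟨hYS, hYX⟩
    exact ⟨Or.inr ⟨Y, ⟨hYS, hYX⟩, rfl⟩, fun hmem => (hS.1.1 (β Y) (hX hmem)).1
      ((IsZero.iff_id_eq_zero _).2 (hmt₀.2.2.1 (β Y) hmem (𝟙 (β Y))))⟩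
  have crux1 : ∀ Y ∈ S \ X, Nonempty (β' (α Y) ≅ Y) := by
    rintro Y ⟨hYS, hYX⟩
    obtain ⟨B₀, f₀, g₀, h₀, hmt₀⟩ := hα Y ⟨hYS, hYX⟩
    obtain ⟨A₁, f₁, g₁, h₁, hmt₁⟩ := hβ' (α Y) (hαmem Y ⟨hYS, hYX⟩)
    exact crux_beta_alpha ν e S X hS hX hst1 hYS hYX hmt₀ hmt₁
  have crux2 : ∀ Y ∈ S \ X, Nonempty (α' (β Y) ≅ Y) := by
    rintro Y ⟨hYS, hYX⟩
    obtain ⟨A₀, f₀, g₀, h₀, hmt₀⟩ := hβ Y ⟨hYS, hYX⟩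
    obtain ⟨B₁, f₁, g₁, h₁, hmt₁⟩ := hα' (β Y) (hβmem Y ⟨hYS, hYX⟩)
    exact crux_alpha_beta ν e hfin S X hS hX hst2 hYS hYX hmt₀ hmt₁
  refine ⟨⟨?_, ?_⟩, ⟨?_, ?_⟩⟩
  · rintro W (hW | ⟨Z, hZ, rfl⟩)
    · exact ⟨W, hX hW, ⟨Iso.refl W⟩⟩
    · obtain ⟨hZmem, hZX⟩ := hZ
      rcases hZmem with hZX' | ⟨Y₀, hY₀, rfl⟩
      · exact absurd hZX' hZX
      · exact ⟨Y₀, hY₀.1, crux1 Y₀ hY₀⟩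
  · intro Y hY
    by_cases hYX : Y ∈ X
    · exact ⟨Y, Or.inl hYX, ⟨Iso.refl Y⟩⟩
    · exact ⟨β' (α Y), Or.inr ⟨α Y, hαmem Y ⟨hY, hYX⟩, rfl⟩, crux1 Y ⟨hY, hYX⟩⟩
  · rintro W (hW | ⟨Z, hZ, rfl⟩)
    · exact ⟨W, hX hW, ⟨Iso.refl W⟩⟩
    · obtain ⟨hZmem, hZX⟩ := hZ
      rcases hZmem with hZX' | ⟨Y₀, hY₀, rfl⟩
      · exact absurd hZX' hZX
      · exact ⟨Y₀, hY₀.1, crux2 Y₀ hY₀⟩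
  · intro Y hY
    by_cases hYX : Y ∈ X
    · exact ⟨Y, Or.inl hYX, ⟨Iso.refl Y⟩⟩
    · exact ⟨α' (β Y), Or.inr ⟨β Y, hβmem Y ⟨hY, hYX⟩, rfl⟩, crux2 Y ⟨hY, hYX⟩⟩
end NuOnto
end
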